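/- arXiv:1710.01638 — 5 statements merged into one kernel-verified Lean document; each statement's English description precedes it below -/
import Mathlib

section
/- Let $X$ be a Banach space with a dense sequence $(x_i)_{i=1}^\infty$ in its unit sphere, and let $E$ be the space of real sequences $a=(a_i)$ with $\|a\|_E = \sup_{0=p_0<p_1<\cdots<p_k} \big(\sum_{j=1}^k \|\sum_{i=p_{j-1}+1}^{p_j} a_i x_i\|_X^2\big)^{1/2} < \infty$. If $a, b \in E$, $a$ is supported in $[1,k]$ and $b$ is supported in $[k+3,\infty)$, then $\|a+b\|_E^2 \geq \|a\|_E^2 + \|b\|_E^2$. -/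
/-- The set of values whose supremum defines the norm of the Lindenstrauss space `E`:
for a finite strictly increasing sequence `0 = p 0 < p 1 < ⋯ < p k`, the value
`(∑_{j=1}^k ‖∑_{i=p_{j-1}+1}^{p_j} a i • x i‖²)^{1/2}`. -/
noncomputable def ENormSet {X : Type*} [NormedAddCommGroup X] [NormedSpace ℝ X]
    (x : ℕ → X) (a : ℕ → ℝ) : Set ℝ :=
  { r | ∃ (k : ℕ) (p : ℕ → ℕ), p 0 = 0 ∧ StrictMono p ∧
      r = Real.sqrt (∑ j ∈ Finset.range k,
        ‖∑ i ∈ Finset.Ioc (p j) (p (j + 1)), a i • x i‖ ^ 2) }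

/-- The norm `‖a‖_E = sup_{0 = p₀ < p₁ < ⋯ < p_k} (∑_j ‖∑_{i=p_{j-1}+1}^{p_j} a_i x_i‖²)^{1/2}`. -/
noncomputable def LindENorm {X : Type*} [NormedAddCommGroup X] [NormedSpace ℝ X]
    (x : ℕ → X) (a : ℕ → ℝ) : ℝ :=
  sSup (ENormSet x a)

open Finset

/-- Dropping indices above `K` from a block sum, when the coefficient vanishes above `K`. -/
private lemma sum_Ioc_eq_of_supp_le {X : Type*} [NormedAddCommGroup X] [NormedSpace ℝ X]
    (x : ℕ → X) (c : ℕ → ℝ) (K : ℕ) (hc : ∀ i, c i ≠ 0 → i ≤ K) (u v : ℕ) (hv : K ≤ v) :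
    ∑ i ∈ Ioc u v, c i • x i = ∑ i ∈ Ioc u K, c i • x i := by
  refine (Finset.sum_subset (Finset.Ioc_subset_Ioc le_rfl hv) ?_).symm
  intro i hi hi'
  simp only [mem_Ioc] at hi hi'
  have : c i = 0 := by
    by_contra h
    exact absurd (hc i h) (by omega)
  simp [this]

/-- Raising the lower endpoint of a block sum, when the coefficient vanishes at or below `K`. -/
private lemma sum_Ioc_eq_of_supp_gt {X : Type*} [NormedAddCommGroup X] [NormedSpace ℝ X]
    (x : ℕ → X) (c : ℕ → ℝ) (K : ℕ) (hc : ∀ i, c i ≠ 0 → K < i) (u u' v : ℕ)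
    (huu' : u ≤ u') (hu' : u' ≤ K) :
    ∑ i ∈ Ioc u v, c i • x i = ∑ i ∈ Ioc u' v, c i • x i := by
  refine (Finset.sum_subset (Finset.Ioc_subset_Ioc huu' le_rfl) ?_).symm
  intro i hi hi'
  simp only [mem_Ioc] at hi hi'
  have : c i = 0 := by
    by_contra h
    exact absurd (hc i h) (by omega)
  simp [this]

/-- ℓ² triangle inequality for finite sums. -/
private lemma sqrt_sum_sq_add_le (m : ℕ) (f g : ℕ → ℝ) :
    Real.sqrt (∑ j ∈ range m, (f j + g j) ^ 2) ≤
      Real.sqrt (∑ j ∈ range m, f j ^ 2) + Real.sqrt (∑ j ∈ range m, g j ^ 2) := by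
  let u : EuclideanSpace ℝ (Fin m) := WithLp.toLp 2 (fun j : Fin m => f j)
  let v : EuclideanSpace ℝ (Fin m) := WithLp.toLp 2 (fun j : Fin m => g j)
  have key : ∀ (h : ℕ → ℝ) (w : EuclideanSpace ℝ (Fin m)), (∀ j : Fin m, w j = h j) →
      Real.sqrt (∑ j ∈ range m, h j ^ 2) = ‖w‖ := by
    intro h w hw
    rw [EuclideanSpace.norm_eq]
    congr 1
    rw [Finset.sum_range (fun j => h j ^ 2)]
    refine Finset.sum_congr rfl fun j _ => ?_
    rw [hw j, Real.norm_eq_abs, sq_abs]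
  rw [key f u (fun j => rfl), key g v (fun j => rfl),
    key (fun j => f j + g j) (u + v) (fun j => rfl)]
  exact norm_add_le u v

private lemma combine {X : Type*} [NormedAddCommGroup X] [NormedSpace ℝ X]
    (x : ℕ → X) (a b : ℕ → ℝ) (k : ℕ)
    (ha : ∀ i, a i ≠ 0 → i ≤ k) (hb : ∀ i, b i ≠ 0 → k + 3 ≤ i)
    (m : ℕ) (p : ℕ → ℕ) (hp0 : p 0 = 0) (hp : StrictMono p)
    (n : ℕ) (q : ℕ → ℕ) (hq0 : q 0 = 0) (hq : StrictMono q) :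
    ∃ u ∈ ENormSet x (a + b),
      (∑ j ∈ range m, ‖∑ i ∈ Ioc (p j) (p (j + 1)), a i • x i‖ ^ 2) +
      (∑ j ∈ range n, ‖∑ i ∈ Ioc (q j) (q (j + 1)), b i • x i‖ ^ 2) ≤ u ^ 2 := by
  classical
  obtain ⟨jA, hjA, hjA'⟩ : ∃ jA, p jA ≤ k ∧ ∀ j, jA < j → k < p j := by
    refine ⟨Nat.findGreatest (fun j => p j ≤ k) (k + 1),
      Nat.findGreatest_spec (P := fun j => p j ≤ k) (Nat.zero_le _) (by simp [hp0]), ?_⟩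
    intro j hj
    by_contra h
    push_neg at h
    have hjle : j ≤ k + 1 := le_trans (le_trans hp.le_apply h) (Nat.le_succ k)
    exact absurd h (Nat.findGreatest_is_greatest (P := fun j => p j ≤ k) hj hjle)
  obtain ⟨jB, hjB, hjB'⟩ : ∃ jB, q jB ≤ k + 2 ∧ ∀ j, jB < j → k + 2 < q j := by
    refine ⟨Nat.findGreatest (fun j => q j ≤ k + 2) (k + 3),
      Nat.findGreatest_spec (P := fun j => q j ≤ k + 2) (Nat.zero_le _) (by simp [hq0]), ?_⟩
    intro j hj
    by_contra h
    push_neg at h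
    have hjle : j ≤ k + 3 := le_trans (le_trans hq.le_apply h) (by omega)
    exact absurd h (Nat.findGreatest_is_greatest (P := fun j => q j ≤ k + 2) hj hjle)
  set r : ℕ → ℕ := fun j => if j ≤ jA then p j else max (q (jB + (j - (jA + 1)))) (k + 2)
    with hrdef
  have hrhead : ∀ j, j ≤ jA → r j = p j := by
    intro j hj; simp only [hrdef]; rw [if_pos hj]
  have hr0 : r 0 = 0 := by rw [hrhead 0 (Nat.zero_le _), hp0]
  have hrtail : ∀ i : ℕ, r (jA + 1 + i) = max (q (jB + i)) (k + 2) := by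
    intro i
    simp only [hrdef]
    rw [if_neg (by omega)]
    congr 2
    omega
  have hrtail' : ∀ i : ℕ, 1 ≤ i → r (jA + 1 + i) = q (jB + i) := by
    intro i hi
    rw [hrtail]
    exact max_eq_left (le_of_lt (hjB' _ (by omega)))
  have hrmono : StrictMono r := by
    apply strictMono_nat_of_lt_succ
    intro j
    rcases lt_trichotomy j jA with h | h | h
    · rw [hrhead j (le_of_lt h), hrhead (j + 1) h]
      exact hp (Nat.lt_succ_self j)
    · subst h
      rw [hrhead j le_rfl, show j + 1 = j + 1 + 0 from rfl, hrtail 0]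
      have : k + 2 ≤ max (q (jB + 0)) (k + 2) := le_max_right _ _
      omega
    · obtain ⟨i, rfl⟩ : ∃ i, j = jA + 1 + i := ⟨j - (jA + 1), by omega⟩
      rw [hrtail i, show jA + 1 + i + 1 = jA + 1 + (i + 1) from rfl,
        hrtail' (i + 1) (by omega)]
      have h1 : q (jB + i) < q (jB + (i + 1)) := hq (by omega)
      have h2 : k + 2 < q (jB + (i + 1)) := hjB' _ (by omega)
      exact max_lt h1 h2
  set C : ℕ → X := fun j => ∑ i ∈ Ioc (r j) (r (j + 1)), (a + b) i • x i with hCdef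
  refine ⟨Real.sqrt (∑ j ∈ range (jA + 1 + n), ‖C j‖ ^ 2),
    ⟨jA + 1 + n, r, hr0, hrmono, rfl⟩, ?_⟩
  have hsumnn : (0:ℝ) ≤ ∑ j ∈ range (jA + 1 + n), ‖C j‖ ^ 2 :=
    Finset.sum_nonneg fun j _ => sq_nonneg _
  rw [Real.sq_sqrt hsumnn, Finset.sum_range_add]
  have hCA : ∀ j, j ≤ jA → C j = ∑ i ∈ Ioc (p j) (p (j + 1)), a i • x i := by
    intro j hj
    rcases lt_or_eq_of_le hj with hj' | hj'
    · -- j < jA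
      rw [hCdef]
      simp only
      rw [hrhead j hj, hrhead (j + 1) hj']
      refine Finset.sum_congr rfl fun i hi => ?_
      simp only [mem_Ioc] at hi
      have hik : i ≤ k := le_trans hi.2 (le_trans (hp.monotone hj') hjA)
      have hbi : b i = 0 := by
        by_contra h
        exact absurd (hb i h) (by omega)
      simp [hbi]
    · -- j = jA
      rw [hCdef]
      simp only
      rw [hj'] at hj ⊢
      rw [hrhead jA le_rfl, show jA + 1 = jA + 1 + 0 from rfl, hrtail 0,
        max_eq_right (by rw [Nat.add_zero]; exact hjB)]
      have h1 : ∑ i ∈ Ioc (p jA) (k + 2), (a + b) i • x i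
          = ∑ i ∈ Ioc (p jA) (k + 2), a i • x i := by
        refine Finset.sum_congr rfl fun i hi => ?_
        simp only [mem_Ioc] at hi
        have hbi : b i = 0 := by
          by_contra h
          exact absurd (hb i h) (by omega)
        simp [hbi]
      rw [h1, sum_Ioc_eq_of_supp_le x a k ha _ _ (by omega),
        sum_Ioc_eq_of_supp_le x a k ha _ _ (le_of_lt (hjA' (jA + 1) (Nat.lt_succ_self jA)))]
  have hCB : ∀ i : ℕ, C (jA + 1 + i) = ∑ i' ∈ Ioc (q (jB + i)) (q (jB + i + 1)), b i' • x i' := by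
    intro i
    rw [hCdef]
    simp only
    rw [hrtail i, show jA + 1 + i + 1 = jA + 1 + (i + 1) from rfl, hrtail' (i + 1) (by omega)]
    have h1 : ∑ i' ∈ Ioc (max (q (jB + i)) (k + 2)) (q (jB + (i + 1))), (a + b) i' • x i'
        = ∑ i' ∈ Ioc (max (q (jB + i)) (k + 2)) (q (jB + (i + 1))), b i' • x i' := by
      refine Finset.sum_congr rfl fun i' hi' => ?_
      simp only [mem_Ioc] at hi'
      have : k + 2 < i' := lt_of_le_of_lt (le_max_right _ _) hi'.1
      have hai : a i' = 0 := by
        by_contra h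
        exact absurd (ha i' h) (by omega)
      simp [hai]
    rw [h1]
    have h2 : ∑ i' ∈ Ioc (max (q (jB + i)) (k + 2)) (q (jB + (i + 1))), b i' • x i'
        = ∑ i' ∈ Ioc (q (jB + i)) (q (jB + (i + 1))), b i' • x i' := by
      rcases le_or_gt (q (jB + i)) (k + 2) with h | h
      · rw [max_eq_right h]
        exact (sum_Ioc_eq_of_supp_gt x b (k + 2) (fun i hi => hb i hi)
          (q (jB + i)) (k + 2) _ h le_rfl).symm
      · rw [max_eq_left (le_of_lt h)]
    rw [h2, show jB + (i + 1) = jB + i + 1 by omega]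
  have part1 : ∑ j ∈ range m, ‖∑ i ∈ Ioc (p j) (p (j + 1)), a i • x i‖ ^ 2
      ≤ ∑ j ∈ range (jA + 1), ‖C j‖ ^ 2 := by
    have hzero : ∀ j ∈ range m, j ∉ range m ∩ range (jA + 1) →
        ‖∑ i ∈ Ioc (p j) (p (j + 1)), a i • x i‖ ^ 2 = 0 := by
      intro j hj hj'
      have hjgt : jA < j := by
        simp only [Finset.mem_inter, Finset.mem_range] at hj hj'
        omega
      rw [sum_Ioc_eq_of_supp_le x a k ha _ _ (le_of_lt (hjA' (j + 1) (by omega)))]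
      rw [Finset.Ioc_eq_empty (by have := hjA' j hjgt; omega)]
      simp
    calc ∑ j ∈ range m, ‖∑ i ∈ Ioc (p j) (p (j + 1)), a i • x i‖ ^ 2
        = ∑ j ∈ range m ∩ range (jA + 1), ‖∑ i ∈ Ioc (p j) (p (j + 1)), a i • x i‖ ^ 2 :=
          (Finset.sum_subset Finset.inter_subset_left hzero).symm
      _ = ∑ j ∈ range m ∩ range (jA + 1), ‖C j‖ ^ 2 := by
          refine Finset.sum_congr rfl fun j hj => ?_
          simp only [Finset.mem_inter, Finset.mem_range] at hj
          rw [hCA j (by omega)]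
      _ ≤ ∑ j ∈ range (jA + 1), ‖C j‖ ^ 2 :=
          Finset.sum_le_sum_of_subset_of_nonneg Finset.inter_subset_right
            (fun j _ _ => sq_nonneg _)
  have part2 : ∑ j ∈ range n, ‖∑ i ∈ Ioc (q j) (q (j + 1)), b i • x i‖ ^ 2
      ≤ ∑ i ∈ range n, ‖C (jA + 1 + i)‖ ^ 2 := by
    have hre : ∑ i ∈ range n, ‖C (jA + 1 + i)‖ ^ 2
        = ∑ j ∈ Ico jB (jB + n), ‖∑ i ∈ Ioc (q j) (q (j + 1)), b i • x i‖ ^ 2 := by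
      rw [Finset.sum_Ico_eq_sum_range]
      rw [show jB + n - jB = n by omega]
      refine Finset.sum_congr rfl fun i _ => ?_
      rw [hCB i]
    rw [hre]
    have hzero : ∀ j ∈ range n, j ∉ range n ∩ Ico jB (jB + n) →
        ‖∑ i ∈ Ioc (q j) (q (j + 1)), b i • x i‖ ^ 2 = 0 := by
      intro j hj hj'
      have hjlt : j < jB := by
        simp only [Finset.mem_inter, Finset.mem_range, Finset.mem_Ico] at hj hj'
        omega
      have hq1 : q (j + 1) ≤ k + 2 := le_trans (hq.monotone (by omega : j + 1 ≤ jB)) hjB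
      rw [sum_Ioc_eq_of_supp_gt x b (k + 2) (fun i hi => hb i hi) (q j) (q (j + 1))
        _ (hq.monotone (by omega)) hq1]
      rw [Finset.Ioc_eq_empty (by omega)]
      simp
    calc ∑ j ∈ range n, ‖∑ i ∈ Ioc (q j) (q (j + 1)), b i • x i‖ ^ 2
        = ∑ j ∈ range n ∩ Ico jB (jB + n), ‖∑ i ∈ Ioc (q j) (q (j + 1)), b i • x i‖ ^ 2 :=
          (Finset.sum_subset Finset.inter_subset_left hzero).symm
      _ ≤ ∑ j ∈ Ico jB (jB + n), ‖∑ i ∈ Ioc (q j) (q (j + 1)), b i • x i‖ ^ 2 :=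
          Finset.sum_le_sum_of_subset_of_nonneg Finset.inter_subset_right
            (fun j _ _ => sq_nonneg _)
  linarith

/-- If `a` is supported in `[1,k]` and `b` is supported in `[k+3,∞)`, then
`‖a+b‖_E² ≥ ‖a‖_E² + ‖b‖_E²`. -/
theorem enorm_sq_add_le {X : Type*} [NormedAddCommGroup X] [NormedSpace ℝ X] [CompleteSpace X]
    (x : ℕ → X) (hx : ∀ i, ‖x i‖ = 1)
    (hdense : Metric.sphere (0 : X) 1 ⊆ closure (Set.range x))
    (a b : ℕ → ℝ) (k : ℕ)
    (ha : ∀ i, a i ≠ 0 → 1 ≤ i ∧ i ≤ k)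
    (hb : ∀ i, b i ≠ 0 → k + 3 ≤ i)
    (haE : BddAbove (ENormSet x a)) (hbE : BddAbove (ENormSet x b)) :
    LindENorm x a ^ 2 + LindENorm x b ^ 2 ≤ LindENorm x (a + b) ^ 2 := by
  classical
  have ha' : ∀ i, a i ≠ 0 → i ≤ k := fun i hi => (ha i hi).2
  have h0mem : ∀ c : ℕ → ℝ, (0:ℝ) ∈ ENormSet x c := by
    intro c
    exact ⟨0, id, rfl, strictMono_id, by simp⟩
  have hSnn : ∀ (c : ℕ → ℝ) (v : ℝ), v ∈ ENormSet x c → 0 ≤ v := by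
    rintro c v ⟨m, p, hp0, hp, rfl⟩
    exact Real.sqrt_nonneg _
  -- boundedness of ENormSet x (a+b)
  have habE : BddAbove (ENormSet x (a + b)) := by
    refine ⟨sSup (ENormSet x a) + sSup (ENormSet x b), ?_⟩
    rintro u ⟨m, p, hp0, hp, rfl⟩
    have hsplit : ∀ j, ∑ i ∈ Ioc (p j) (p (j + 1)), (a + b) i • x i
        = (∑ i ∈ Ioc (p j) (p (j + 1)), a i • x i) + ∑ i ∈ Ioc (p j) (p (j + 1)), b i • x i := by
      intro j
      rw [← Finset.sum_add_distrib]
      refine Finset.sum_congr rfl fun i _ => ?_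
      simp [add_smul]
    have h1 : Real.sqrt (∑ j ∈ range m, ‖∑ i ∈ Ioc (p j) (p (j + 1)), (a + b) i • x i‖ ^ 2)
        ≤ Real.sqrt (∑ j ∈ range m,
            (‖∑ i ∈ Ioc (p j) (p (j + 1)), a i • x i‖
              + ‖∑ i ∈ Ioc (p j) (p (j + 1)), b i • x i‖) ^ 2) := by
      apply Real.sqrt_le_sqrt
      refine Finset.sum_le_sum fun j _ => ?_
      have hle := norm_add_le (∑ i ∈ Ioc (p j) (p (j + 1)), a i • x i)
        (∑ i ∈ Ioc (p j) (p (j + 1)), b i • x i)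
      rw [hsplit j]
      exact pow_le_pow_left₀ (norm_nonneg _) hle 2
    have h2 := sqrt_sum_sq_add_le m
      (fun j => ‖∑ i ∈ Ioc (p j) (p (j + 1)), a i • x i‖)
      (fun j => ‖∑ i ∈ Ioc (p j) (p (j + 1)), b i • x i‖)
    have h3 : Real.sqrt (∑ j ∈ range m, ‖∑ i ∈ Ioc (p j) (p (j + 1)), a i • x i‖ ^ 2)
        ≤ sSup (ENormSet x a) := le_csSup haE ⟨m, p, hp0, hp, rfl⟩
    have h4 : Real.sqrt (∑ j ∈ range m, ‖∑ i ∈ Ioc (p j) (p (j + 1)), b i • x i‖ ^ 2)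
        ≤ sSup (ENormSet x b) := le_csSup hbE ⟨m, p, hp0, hp, rfl⟩
    calc Real.sqrt (∑ j ∈ range m, ‖∑ i ∈ Ioc (p j) (p (j + 1)), (a + b) i • x i‖ ^ 2)
        ≤ _ := h1
      _ ≤ _ := h2
      _ ≤ sSup (ENormSet x a) + sSup (ENormSet x b) := add_le_add h3 h4
  set A := sSup (ENormSet x a) with hA
  set B := sSup (ENormSet x b) with hB
  set Cs := sSup (ENormSet x (a + b)) with hC
  have hAnn : 0 ≤ A := le_csSup haE (h0mem a)
  have hBnn : 0 ≤ B := le_csSup hbE (h0mem b)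
  have hCnn : 0 ≤ Cs := le_csSup habE (h0mem (a + b))
  have hmain : ∀ v ∈ ENormSet x a, ∀ w ∈ ENormSet x b, v ^ 2 + w ^ 2 ≤ Cs ^ 2 := by
    rintro v ⟨m, p, hp0, hp, rfl⟩ w ⟨n, q, hq0, hq, rfl⟩
    obtain ⟨u, huU, hu⟩ := combine x a b k ha' hb m p hp0 hp n q hq0 hq
    have huC : u ≤ Cs := le_csSup habE huU
    have hunn : 0 ≤ u := hSnn _ u huU
    have h1 : u ^ 2 ≤ Cs ^ 2 := pow_le_pow_left₀ hunn huC 2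
    have h2 : Real.sqrt (∑ j ∈ range m, ‖∑ i ∈ Ioc (p j) (p (j + 1)), a i • x i‖ ^ 2) ^ 2
        = ∑ j ∈ range m, ‖∑ i ∈ Ioc (p j) (p (j + 1)), a i • x i‖ ^ 2 :=
      Real.sq_sqrt (Finset.sum_nonneg fun j _ => sq_nonneg _)
    have h3 : Real.sqrt (∑ j ∈ range n, ‖∑ i ∈ Ioc (q j) (q (j + 1)), b i • x i‖ ^ 2) ^ 2
        = ∑ j ∈ range n, ‖∑ i ∈ Ioc (q j) (q (j + 1)), b i • x i‖ ^ 2 :=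
      Real.sq_sqrt (Finset.sum_nonneg fun j _ => sq_nonneg _)
    rw [h2, h3]
    linarith
  have hstep1 : ∀ w ∈ ENormSet x b, A ^ 2 ≤ Cs ^ 2 - w ^ 2 := by
    intro w hw
    have hwC : w ^ 2 ≤ Cs ^ 2 := by
      have := hmain 0 (h0mem a) w hw
      simpa using this
    have hv : ∀ v ∈ ENormSet x a, v ≤ Real.sqrt (Cs ^ 2 - w ^ 2) := by
      intro v hv
      rw [Real.le_sqrt (hSnn _ v hv) (by linarith)]
      have := hmain v hv w hw
      linarith
    have hAle : A ≤ Real.sqrt (Cs ^ 2 - w ^ 2) := csSup_le ⟨0, h0mem a⟩ hv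
    have := pow_le_pow_left₀ hAnn hAle 2
    rwa [Real.sq_sqrt (by linarith)] at this
  have hA2 : A ^ 2 ≤ Cs ^ 2 := by
    have := hstep1 0 (h0mem b)
    simpa using this
  have hstep2 : ∀ w ∈ ENormSet x b, w ≤ Real.sqrt (Cs ^ 2 - A ^ 2) := by
    intro w hw
    rw [Real.le_sqrt (hSnn _ w hw) (by linarith)]
    have := hstep1 w hw
    linarith
  have hBle : B ≤ Real.sqrt (Cs ^ 2 - A ^ 2) := csSup_le ⟨0, h0mem b⟩ hstep2
  have hB2 : B ^ 2 ≤ Cs ^ 2 - A ^ 2 := by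
    have := pow_le_pow_left₀ hBnn hBle 2
    rwa [Real.sq_sqrt (by linarith)] at this
  show A ^ 2 + B ^ 2 ≤ Cs ^ 2
  linarith
end

section
/- If $\mathcal{F}$ and $\mathcal{G}$ are regular families of finite subsets of $\mathbb{N}$ (hereditary, spreading, and compact), $E < F$, $F \neq \emptyset$, and both $E$ and $E \cup F$ belong to $\mathcal{F}[\mathcal{G}]$, then either $E \in \mathcal{F}^{(1)}[\mathcal{G}]$ or $F \in \mathcal{G}$. -/
/-- The indicator of a finite set of naturals, as a point of the Cantor space `ℕ → Bool`. -/
def finsetInd (E : Finset ℕ) : ℕ → Bool := fun n => decide (n ∈ E)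

/-- A family of finite subsets of `ℕ`, viewed as a subset of the Cantor space. -/
def famTop (F : Set (Finset ℕ)) : Set (ℕ → Bool) := finsetInd '' F

/-- A family is hereditary if it is closed under subsets. -/
def Hereditary (F : Set (Finset ℕ)) : Prop := ∀ E ∈ F, ∀ G ⊆ E, G ∈ F

/-- `G` is a spread of `E` if they have the same cardinality and the `i`-th element of `G`
(in increasing order) is at least the `i`-th element of `E`. -/
def IsSpreadOf (G E : Finset ℕ) : Prop :=
  ∃ h : G.card = E.card, ∀ i : Fin E.card,
    ((E.orderIsoOfFin rfl) i).1 ≤ ((G.orderIsoOfFin h) i).1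

/-- A family is spreading if it contains all spreads of its members. -/
def Spreading (F : Set (Finset ℕ)) : Prop := ∀ E ∈ F, ∀ G, IsSpreadOf G E → G ∈ F

/-- A family is regular if it is hereditary, spreading, and compact in the Cantor space. -/
def RegularFam (F : Set (Finset ℕ)) : Prop :=
  Hereditary F ∧ Spreading F ∧ IsCompact (famTop F)

/-- `E < F` for finite sets: every element of `E` is less than every element of `F`. -/
def FinsetLT (E F : Finset ℕ) : Prop := ∀ a ∈ E, ∀ b ∈ F, a < b

/-- The bracket operation
`F[G] = {∅} ∪ {E₁ ∪ ⋯ ∪ Eₙ : ∅ ≠ Eᵢ ∈ G, E₁ < ⋯ < Eₙ, (min Eᵢ)ᵢ ∈ F}`. -/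
def bracketFam (F G : Set (Finset ℕ)) : Set (Finset ℕ) :=
  {∅} ∪ { E | ∃ (n : ℕ) (_ : 0 < n) (Es : Fin n → Finset ℕ)
      (hne : ∀ i, (Es i).Nonempty),
      (∀ i, Es i ∈ G) ∧ (∀ i j : Fin n, i < j → FinsetLT (Es i) (Es j)) ∧
      (Finset.univ.image fun i => (Es i).min' (hne i)) ∈ F ∧
      E = Finset.univ.biUnion Es }

/-- The Cantor–Bendixson derived family: those `E` whose indicator is an accumulation point
of the family in the Cantor space. -/
def derivFam (F : Set (Finset ℕ)) : Set (Finset ℕ) :=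
  { E | finsetInd E ∈ derivedSet (famTop F) }

lemma finsetInd_inj {A B : Finset ℕ} (h : finsetInd A = finsetInd B) : A = B := by
  ext n
  have := congrFun h n
  simpa [finsetInd, decide_eq_decide] using this

lemma orderEmbOfFin_union_singleton {T : Finset ℕ} {t : ℕ} (hTt : ∀ s ∈ T, s < t)
    {k : ℕ} (h : (T ∪ {t}).card = k) (i : Fin k) :
    (T ∪ {t}).orderEmbOfFin h i =
      if h' : i.val < T.card then T.orderEmbOfFin rfl ⟨i, h'⟩ else t := by
  have htT : t ∉ T := fun hh => lt_irrefl t (hTt t hh)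
  have hins : T ∪ {t} = insert t T := by ext x; simp [or_comm]
  have hk : k = T.card + 1 := by
    rw [← h, hins, Finset.card_insert_of_notMem htT]
  subst hk
  have hmem : ∀ x : Fin (T.card + 1),
      (if h' : x.val < T.card then T.orderEmbOfFin rfl ⟨x, h'⟩ else t) ∈ T ∪ {t} := by
    intro x
    split
    · exact Finset.mem_union_left _ (Finset.orderEmbOfFin_mem _ _ _)
    · exact Finset.mem_union_right _ (Finset.mem_singleton_self t)
  have hmono : StrictMono (fun x : Fin (T.card + 1) =>
      if h' : x.val < T.card then T.orderEmbOfFin rfl ⟨x, h'⟩ else t) := by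
    intro a b hab
    dsimp only
    rcases Nat.lt_or_ge a.val T.card with ha | ha <;>
      rcases Nat.lt_or_ge b.val T.card with hb | hb
    · rw [dif_pos ha, dif_pos hb]
      exact (T.orderEmbOfFin rfl).strictMono (by exact hab)
    · rw [dif_pos ha, dif_neg (by omega)]
      exact hTt _ (Finset.orderEmbOfFin_mem _ _ _)
    · exfalso; have h1 := a.isLt; have h2 := b.isLt
      have h3 : a.val < b.val := hab
      omega
    · exfalso; have h1 := a.isLt; have h2 := b.isLt
      have h3 : a.val < b.val := hab
      omega
  exact (congrFun (Finset.orderEmbOfFin_unique h hmem hmono) i).symm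

lemma isSpreadOf_union_singleton {T : Finset ℕ} {t u : ℕ}
    (hTt : ∀ s ∈ T, s < t) (htu : t ≤ u) :
    IsSpreadOf (T ∪ {u}) (T ∪ {t}) := by
  have hTu : ∀ s ∈ T, s < u := fun s hs => (hTt s hs).trans_le htu
  have htT : t ∉ T := fun hh => lt_irrefl t (hTt t hh)
  have huT : u ∉ T := fun hh => lt_irrefl u (hTu u hh)
  have hct : (T ∪ {t}).card = T.card + 1 := by
    rw [show T ∪ {t} = insert t T by ext x; simp [or_comm], Finset.card_insert_of_notMem htT]
  have hcu : (T ∪ {u}).card = T.card + 1 := by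
    rw [show T ∪ {u} = insert u T by ext x; simp [or_comm], Finset.card_insert_of_notMem huT]
  refine ⟨hcu.trans hct.symm, fun i => ?_⟩
  have e1 : ((T ∪ {t}).orderIsoOfFin rfl i).1 = (T ∪ {t}).orderEmbOfFin rfl i :=
    Finset.coe_orderIsoOfFin_apply _ _ _
  have e2 : ((T ∪ {u}).orderIsoOfFin (hcu.trans hct.symm) i).1
      = (T ∪ {u}).orderEmbOfFin (hcu.trans hct.symm) i :=
    Finset.coe_orderIsoOfFin_apply _ _ _
  rw [e1, e2, orderEmbOfFin_union_singleton hTt, orderEmbOfFin_union_singleton hTu]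
  split
  · exact le_rfl
  · exact htu

lemma mem_derivFam_of_union {F : Set (Finset ℕ)} (hF : RegularFam F) {T : Finset ℕ} {t : ℕ}
    (hTt : ∀ s ∈ T, s < t) (hmem : T ∪ {t} ∈ F) : T ∈ derivFam F := by
  rw [derivFam, Set.mem_setOf_eq, mem_derivedSet, accPt_principal_iff_clusterPt,
    ← mem_closure_iff_clusterPt]
  have key : ∀ u : ℕ, finsetInd (T ∪ {t + u}) ∈ famTop F \ {finsetInd T} := by
    intro u
    refine ⟨⟨_, hF.2.1 _ hmem _ (isSpreadOf_union_singleton hTt (Nat.le_add_right t u)), rfl⟩, ?_⟩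
    simp only [Set.mem_singleton_iff]
    intro hcontra
    have heq := finsetInd_inj hcontra
    have : t + u ∈ T := by
      rw [← heq]; simp
    exact absurd (hTt _ this) (by omega)
  have htd : Filter.Tendsto (fun u : ℕ => finsetInd (T ∪ {t + u})) Filter.atTop
      (nhds (finsetInd T)) := by
    rw [tendsto_pi_nhds]
    intro m
    apply Filter.Tendsto.congr' _ tendsto_const_nhds
    filter_upwards [Filter.eventually_ge_atTop (m + 1)] with u hu
    simp only [finsetInd, Finset.mem_union, Finset.mem_singleton, decide_eq_decide]
    constructor
    · exact Or.inl
    · rintro (h | h)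
      · exact h
      · omega
  exact mem_closure_of_tendsto htd (Filter.Eventually.of_forall key)

/-- If `F` and `G` are regular families, `E < F'`, `F'` nonempty, and both `E` and `E ∪ F'`
belong to `F[G]`, then `E ∈ F⁽¹⁾[G]` or `F' ∈ G`. -/
theorem bracket_mem_deriv_or {F G : Set (Finset ℕ)}
    (hF : RegularFam F) (hG : RegularFam G)
    (E F' : Finset ℕ) (hlt : FinsetLT E F') (hne : F'.Nonempty)
    (hE : E ∈ bracketFam F G) (hEF : E ∪ F' ∈ bracketFam F G) :
    E ∈ bracketFam (derivFam F) G ∨ F' ∈ G := by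
  by_cases hEemp : E = ∅
  · exact Or.inl (Or.inl (by simp [hEemp]))
  have hEne : E.Nonempty := Finset.nonempty_iff_ne_empty.mpr hEemp
  rcases hEF with h0 | ⟨n, hn, Es, hneEs, hEsG, hord, hmins, hunion⟩
  · exfalso
    obtain ⟨x, hx⟩ := hne
    have hx' : x ∈ E ∪ F' := Finset.mem_union_right _ hx
    rw [Set.mem_singleton_iff.mp h0] at hx'
    exact absurd hx' (Finset.notMem_empty x)
  have hcov : ∀ x ∈ E ∪ F', ∃ i, x ∈ Es i := by
    intro x hx
    rw [hunion] at hx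
    obtain ⟨i, _, hi⟩ := Finset.mem_biUnion.mp hx
    exact ⟨i, hi⟩
  have hsub : ∀ i, Es i ⊆ E ∪ F' := by
    intro i x hx
    rw [hunion]
    exact Finset.mem_biUnion.mpr ⟨i, Finset.mem_univ i, hx⟩
  have hdisj : ∀ x, x ∈ E → x ∈ F' → False := fun x hxE hxF => lt_irrefl x (hlt x hxE x hxF)
  set K : Finset (Fin n) := Finset.univ.filter (fun i => ((Es i) ∩ E).Nonempty) with hK
  have hKmem : ∀ i : Fin n, i ∈ K ↔ (Es i ∩ E).Nonempty := by
    intro i; simp [hK]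
  have hKne : K.Nonempty := by
    obtain ⟨x, hx⟩ := hEne
    obtain ⟨i, hi⟩ := hcov x (Finset.mem_union_left _ hx)
    exact ⟨i, (hKmem i).mpr ⟨x, Finset.mem_inter.mpr ⟨hi, hx⟩⟩⟩
  set k₀ := K.max' hKne with hk₀
  have hk₀ne : (Es k₀ ∩ E).Nonempty := (hKmem k₀).mp (K.max'_mem hKne)
  have hbelow : ∀ i : Fin n, i < k₀ → Es i ⊆ E := by
    intro i hi x hx
    rcases Finset.mem_union.mp (hsub i hx) with h | h
    · exact h
    · exfalso
      obtain ⟨y, hy⟩ := hk₀ne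
      have hy1 := (Finset.mem_inter.mp hy).1
      have hy2 := (Finset.mem_inter.mp hy).2
      have h1 : x < y := hord i k₀ hi x hx y hy1
      have h2 : y < x := hlt y hy2 x h
      omega
  have hinter : ∀ i : Fin n, i ≤ k₀ → (Es i ∩ E).Nonempty := by
    intro i hi
    rcases eq_or_lt_of_le hi with h | h
    · rw [h]; exact hk₀ne
    · obtain ⟨x, hx⟩ := hneEs i
      exact ⟨x, Finset.mem_inter.mpr ⟨hx, hbelow i h hx⟩⟩
  have hminE : ∀ (i : Fin n), i ≤ k₀ → (Es i).min' (hneEs i) ∈ Es i ∩ E := by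
    intro i hi
    have hm := Finset.min'_mem (Es i) (hneEs i)
    rcases Finset.mem_union.mp (hsub i hm) with h | h
    · exact Finset.mem_inter.mpr ⟨hm, h⟩
    · exfalso
      obtain ⟨y, hy⟩ := hinter i hi
      have hy1 := (Finset.mem_inter.mp hy).1
      have hy2 := (Finset.mem_inter.mp hy).2
      have h1 : (Es i).min' (hneEs i) ≤ y := Finset.min'_le _ _ hy1
      have h2 : y < (Es i).min' (hneEs i) := hlt y hy2 _ h
      omega
  by_cases hcase : ∀ j : Fin n, j ≤ k₀
  · right
    refine hG.1 (Es k₀) (hEsG k₀) F' ?_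
    intro x hx
    obtain ⟨i, hi⟩ := hcov x (Finset.mem_union_right _ hx)
    rcases eq_or_lt_of_le (hcase i) with h | h
    · exact h ▸ hi
    · exact absurd (hdisj x (hbelow i h hi) hx) not_false
  · push_neg at hcase
    obtain ⟨j, hj⟩ := hcase
    have hjk : k₀ < j := hj
    left
    right
    have hkn : k₀.val + 1 ≤ n := k₀.isLt
    have hcle : ∀ i : Fin (k₀.val + 1), Fin.castLE hkn i ≤ k₀ := by
      intro i
      have hi := i.isLt
      exact Fin.le_def.mpr (by simp only [Fin.coe_castLE]; omega)
    have hneD : ∀ i : Fin (k₀.val + 1), (Es (Fin.castLE hkn i) ∩ E).Nonempty :=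
      fun i => hinter _ (hcle i)
    refine ⟨k₀.val + 1, Nat.succ_pos _, fun i => Es (Fin.castLE hkn i) ∩ E, hneD,
      ?_, ?_, ?_, ?_⟩
    · exact fun i => hG.1 _ (hEsG _) _ Finset.inter_subset_left
    · intro i j' hij a ha b hb
      exact hord _ _ (Fin.lt_def.mpr (Fin.lt_def.mp hij)) a (Finset.mem_inter.mp ha).1
        b (Finset.mem_inter.mp hb).1
    · -- mins in derivFam F
      have hmin_eq : ∀ i : Fin (k₀.val + 1),
          (Es (Fin.castLE hkn i) ∩ E).min' (hneD i)
            = (Es (Fin.castLE hkn i)).min' (hneEs _) := by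
        intro i
        apply le_antisymm
        · exact Finset.min'_le _ _ (hminE _ (hcle i))
        · exact Finset.min'_le _ _ (Finset.mem_of_mem_inter_left (Finset.min'_mem _ _))
      have himg : (Finset.univ.image fun i : Fin (k₀.val + 1) =>
          (Es (Fin.castLE hkn i) ∩ E).min' (hneD i))
          = Finset.univ.image (fun i : Fin (k₀.val + 1) =>
              (Es (Fin.castLE hkn i)).min' (hneEs _)) :=
        Finset.image_congr (fun i _ => hmin_eq i)
      rw [himg]
      apply mem_derivFam_of_union hF (t := (Es j).min' (hneEs j))
      · intro s hs
        obtain ⟨i, _, hi⟩ := Finset.mem_image.mp hs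
        have hlt' : Fin.castLE hkn i < j := lt_of_le_of_lt (hcle i) hjk
        rw [← hi]
        exact hord _ j hlt' _ (Finset.min'_mem _ _) _ (Finset.min'_mem _ _)
      · apply hF.1 _ hmins
        intro x hx
        rcases Finset.mem_union.mp hx with h | h
        · obtain ⟨i, _, hi⟩ := Finset.mem_image.mp h
          exact Finset.mem_image.mpr ⟨Fin.castLE hkn i, Finset.mem_univ _, hi⟩
        · rw [Finset.mem_singleton.mp h]
          exact Finset.mem_image.mpr ⟨j, Finset.mem_univ _, rfl⟩
    · -- E = biUnion
      ext x
      simp only [Finset.mem_biUnion, Finset.mem_univ, true_and]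
      constructor
      · intro hx
        obtain ⟨i, hi⟩ := hcov x (Finset.mem_union_left _ hx)
        have hik : i ≤ k₀ := K.le_max' i ((hKmem i).mpr ⟨x, Finset.mem_inter.mpr ⟨hi, hx⟩⟩)
        refine ⟨⟨i.val, by have := Fin.le_def.mp hik; omega⟩, ?_⟩
        have hci : Fin.castLE hkn ⟨i.val, by have := Fin.le_def.mp hik; omega⟩ = i := rfl
        rw [hci]
        exact Finset.mem_inter.mpr ⟨hi, hx⟩
      · rintro ⟨i, hi⟩
        exact (Finset.mem_inter.mp hi).2
end

section
/- Let $X$ be a Banach space with a shrinking Schauder basis $(x_i)_{i=1}^\infty$, and let $X^{\ell_2}$ be the completion of $c_{00}$ under the norm $\|\sum a_i e_i\| = \sup\{(\sum_{i} \|\sum_{j=k_{i-1}+1}^{k_i} a_j x_j\|_X^2)^{1/2} : 0 \leq k_0 < k_1 < \cdots\}$. If $x^*, y^*$ are elements of $(X^{\ell_2})^*$ that are finite linear combinations of the coordinate functionals $(e_i^*)$ with $\max \mathrm{supp}(x^*) < \min \mathrm{supp}(y^*)$, then $\|x^* + y^*\|^2 \leq \|x^*\|^2 + \|y^*\|^2$.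 -/
/-- The set of values whose supremum defines the norm of `X^{ℓ₂}`: for an increasing
sequence `0 ≤ k₀ < k₁ < ⋯`, the value `(∑ᵢ ‖∑_{j=kᵢ+1}^{k_{i+1}} a_j x_j‖²)^{1/2}`. -/
noncomputable def XL2Set {X : Type*} [NormedAddCommGroup X] [NormedSpace ℝ X]
    (x : ℕ → X) (a : ℕ → ℝ) : Set ℝ :=
  { r | ∃ k : ℕ → ℕ, StrictMono k ∧
      r = Real.sqrt (∑' j : ℕ, ‖∑ i ∈ Finset.Ioc (k j) (k (j + 1)), a i • x i‖ ^ 2) }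

/-- The norm of `X^{ℓ₂}` on (coefficient sequences of) `c₀₀`. -/
noncomputable def XL2Norm {X : Type*} [NormedAddCommGroup X] [NormedSpace ℝ X]
    (x : ℕ → X) (a : ℕ → ℝ) : ℝ :=
  sSup (XL2Set x a)

/-- `(xᵢ)` is a Schauder basis of `X`: every vector has a unique representation as a norm
convergent series `∑ aᵢ xᵢ` (convergence of partial sums). -/
def IsSchauderBasis {X : Type*} [NormedAddCommGroup X] [NormedSpace ℝ X]
    (x : ℕ → X) : Prop :=
  ∀ v : X, ∃! a : ℕ → ℝ,
    Filter.Tendsto (fun n => ∑ i ∈ Finset.range n, a i • x i) Filter.atTop (nhds v)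

/-- The basis `(xᵢ)` is shrinking: for every functional `f`, the norm of the restriction of
`f` to the closed span of the tail vectors tends to `0`. -/
def IsShrinkingBasis {X : Type*} [NormedAddCommGroup X] [NormedSpace ℝ X]
    (x : ℕ → X) : Prop :=
  ∀ f : StrongDual ℝ X,
    Filter.Tendsto
      (fun n => sSup { r | ∃ v : X,
        v ∈ Submodule.span ℝ (x '' Set.Ici n) ∧ ‖v‖ ≤ 1 ∧ r = |f v| })
      Filter.atTop (nhds 0)

/-- The dual norm, on `(X^{ℓ₂})*`, of a finite linear combination `∑ bᵢ eᵢ*` of the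
coordinate functionals: the supremum of its values on the unit ball of `c₀₀ ⊆ X^{ℓ₂}`
(which is norm-dense in the unit ball of `X^{ℓ₂}`). -/
noncomputable def XL2DualNorm {X : Type*} [NormedAddCommGroup X] [NormedSpace ℝ X]
    (x : ℕ → X) (b : ℕ → ℝ) : ℝ :=
  sSup { r | ∃ a : ℕ → ℝ, (Function.support a).Finite ∧ XL2Norm x a ≤ 1 ∧
    r = |∑' i : ℕ, b i * a i| }

open Finset

section XL2Aux
variable {X : Type*} [NormedAddCommGroup X] [NormedSpace ℝ X]

noncomputable def XLS (x : ℕ → X) (a : ℕ → ℝ) (m n : ℕ) : X := ∑ i ∈ Finset.Ioc m n, a i • x i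

noncomputable def XLblk (x : ℕ → X) (a : ℕ → ℝ) (k : ℕ → ℕ) (j : ℕ) : ℝ :=
  ‖XLS x a (k j) (k (j + 1))‖ ^ 2

lemma XLblk_nonneg (x : ℕ → X) (a : ℕ → ℝ) (k : ℕ → ℕ) (j : ℕ) : 0 ≤ XLblk x a k j :=
  sq_nonneg _

lemma mem_XL2Set_iff {x : ℕ → X} {a : ℕ → ℝ} {r : ℝ} :
    r ∈ XL2Set x a ↔ ∃ k : ℕ → ℕ, StrictMono k ∧ r = Real.sqrt (∑' j, XLblk x a k j) :=
  Iff.rfl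

lemma XL_exists_bound {a : ℕ → ℝ} (ha : (Function.support a).Finite) :
    ∃ P : ℕ, ∀ i, P ≤ i → a i = 0 := by
  obtain ⟨P, hP⟩ := ha.bddAbove
  refine ⟨P + 1, fun i hi => ?_⟩
  by_contra h
  have : i ≤ P := hP (by simpa [Function.mem_support] using h)
  omega

lemma XLblk_eq_zero (x : ℕ → X) (a : ℕ → ℝ) (k : ℕ → ℕ) (hk : StrictMono k)
    {P : ℕ} (hP : ∀ i, P ≤ i → a i = 0) {j : ℕ} (hj : P ≤ j) : XLblk x a k j = 0 := by
  have : ∑ i ∈ Finset.Ioc (k j) (k (j + 1)), a i • x i = 0 := by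
    refine Finset.sum_eq_zero fun i hi => ?_
    have h1 : k j < i := (Finset.mem_Ioc.mp hi).1
    have h2 : j ≤ k j := hk.le_apply
    rw [hP i (by omega), zero_smul]
  simp [XLblk, XLS, this]

lemma XL_summable_blk (x : ℕ → X) (a : ℕ → ℝ) (k : ℕ → ℕ) (hk : StrictMono k)
    {P : ℕ} (hP : ∀ i, P ≤ i → a i = 0) : Summable (XLblk x a k) :=
  summable_of_ne_finset_zero (s := range P) fun j hj =>
    XLblk_eq_zero x a k hk hP (by simpa using hj)

lemma XL_tele (g : ℕ → ℝ) (k : ℕ → ℕ) (hk : Monotone k) (P : ℕ) :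
    ∑ j ∈ range P, ∑ i ∈ Ioc (k j) (k (j + 1)), g i = ∑ i ∈ Ioc (k 0) (k P), g i := by
  induction P with
  | zero => simp
  | succ P ih =>
      rw [Finset.sum_range_succ, ih,
        Finset.sum_Ioc_consecutive _ (hk (Nat.zero_le P)) (hk (Nat.le_succ P))]

lemma XL2Set_nonempty (x : ℕ → X) (a : ℕ → ℝ) : (XL2Set x a).Nonempty :=
  ⟨_, ⟨id, strictMono_id, rfl⟩⟩

lemma XL2Set_mem_nonneg {x : ℕ → X} {a : ℕ → ℝ} {r : ℝ} (hr : r ∈ XL2Set x a) : 0 ≤ r := by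
  obtain ⟨k, hk, rfl⟩ := hr
  exact Real.sqrt_nonneg _

lemma XL2Set_bddAbove (x : ℕ → X) (a : ℕ → ℝ) (ha : (Function.support a).Finite) :
    BddAbove (XL2Set x a) := by
  obtain ⟨P, hP⟩ := XL_exists_bound ha
  set C := ∑ i ∈ ha.toFinset, |a i| * ‖x i‖ with hC
  have hC0 : 0 ≤ C := Finset.sum_nonneg fun i _ => mul_nonneg (abs_nonneg _) (norm_nonneg _)
  refine ⟨C, ?_⟩
  rintro r ⟨k, hk, rfl⟩
  have h1 : (∑' j, ‖∑ i ∈ Finset.Ioc (k j) (k (j + 1)), a i • x i‖ ^ 2)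
      = ∑ j ∈ range P, XLblk x a k j :=
    tsum_eq_sum fun j hj => XLblk_eq_zero x a k hk hP (by simpa using hj)
  rw [h1]
  have h3 : ∑ j ∈ range P, ‖∑ i ∈ Ioc (k j) (k (j + 1)), a i • x i‖ ≤ C := by
    calc ∑ j ∈ range P, ‖∑ i ∈ Ioc (k j) (k (j + 1)), a i • x i‖
        ≤ ∑ j ∈ range P, ∑ i ∈ Ioc (k j) (k (j + 1)), |a i| * ‖x i‖ := by
          refine Finset.sum_le_sum fun j _ => (norm_sum_le _ _).trans ?_
          refine le_of_eq (Finset.sum_congr rfl fun i _ => ?_)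
          rw [norm_smul, Real.norm_eq_abs]
      _ = ∑ i ∈ Ioc (k 0) (k P), |a i| * ‖x i‖ := XL_tele _ _ hk.monotone P
      _ ≤ ∑ i ∈ Ioc (k 0) (k P) ∪ ha.toFinset, |a i| * ‖x i‖ :=
          Finset.sum_le_sum_of_subset_of_nonneg Finset.subset_union_left
            (fun i _ _ => mul_nonneg (abs_nonneg _) (norm_nonneg _))
      _ = C := by
          refine (Finset.sum_subset Finset.subset_union_right fun i _ hi => ?_).symm
          have : a i = 0 := by simpa [Function.mem_support] using hi
          simp [this]
  have h2 : ∑ j ∈ range P, XLblk x a k j ≤ C ^ 2 := by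
    calc ∑ j ∈ range P, XLblk x a k j
        ≤ (∑ j ∈ range P, ‖∑ i ∈ Ioc (k j) (k (j + 1)), a i • x i‖) ^ 2 :=
          Finset.sum_sq_le_sq_sum_of_nonneg fun j _ => norm_nonneg _
      _ ≤ C ^ 2 := by
          refine pow_le_pow_left₀ (Finset.sum_nonneg fun j _ => norm_nonneg _) h3 2
  calc Real.sqrt (∑ j ∈ range P, XLblk x a k j) ≤ Real.sqrt (C ^ 2) := Real.sqrt_le_sqrt h2
    _ = C := by rw [Real.sqrt_sq hC0]

lemma le_XL2Norm (x : ℕ → X) (a : ℕ → ℝ) (ha : (Function.support a).Finite)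
    {r : ℝ} (hr : r ∈ XL2Set x a) : r ≤ XL2Norm x a :=
  le_csSup (XL2Set_bddAbove x a ha) hr

lemma XL2Norm_nonneg (x : ℕ → X) (a : ℕ → ℝ) (ha : (Function.support a).Finite) :
    0 ≤ XL2Norm x a := by
  obtain ⟨r, hr⟩ := XL2Set_nonempty x a
  exact (XL2Set_mem_nonneg hr).trans (le_XL2Norm x a ha hr)


-- singleton lower bound
lemma XL_single_le (x : ℕ → X) (a : ℕ → ℝ) (ha : (Function.support a).Finite)
    {i : ℕ} (hi : 1 ≤ i) : |a i| * ‖x i‖ ≤ XL2Norm x a := by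
  obtain ⟨P, hP⟩ := XL_exists_bound ha
  set k : ℕ → ℕ := fun j => i - 1 + j with hkdef
  have hks : StrictMono k := fun m n h => by simp only [hkdef]; omega
  have hIoc : Finset.Ioc (k 0) (k 1) = {i} := by
    have h0 : k 0 = i - 1 := by simp [hkdef]
    have h1 : k 1 = i := by simp only [hkdef]; omega
    rw [h0, h1]
    ext l
    simp only [Finset.mem_Ioc, Finset.mem_singleton]
    omega
  have hb0 : ‖∑ l ∈ Finset.Ioc (k 0) (k 1), a l • x l‖ ^ 2 = (|a i| * ‖x i‖) ^ 2 := by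
    rw [hIoc, Finset.sum_singleton, norm_smul, Real.norm_eq_abs]
  have hsum : Summable (fun j => ‖∑ l ∈ Finset.Ioc (k j) (k (j + 1)), a l • x l‖ ^ 2) :=
    XL_summable_blk x a k hks hP
  have hle : ‖∑ l ∈ Finset.Ioc (k 0) (k 1), a l • x l‖ ^ 2
      ≤ ∑' j, ‖∑ l ∈ Finset.Ioc (k j) (k (j + 1)), a l • x l‖ ^ 2 :=
    Summable.le_tsum hsum 0 fun j _ => XLblk_nonneg x a k j
  have h2 : |a i| * ‖x i‖ ≤ Real.sqrt (∑' j, ‖∑ l ∈ Finset.Ioc (k j) (k (j + 1)), a l • x l‖ ^ 2) := by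
    rw [← Real.sqrt_sq (by positivity : (0:ℝ) ≤ |a i| * ‖x i‖)]
    exact Real.sqrt_le_sqrt (hb0 ▸ hle)
  exact h2.trans (le_XL2Norm x a ha ⟨k, hks, rfl⟩)

lemma XL_basis_ne_zero {x : ℕ → X} (hbasis : IsSchauderBasis x) (i : ℕ) : x i ≠ 0 := by
  intro h
  obtain ⟨a, _, hu⟩ := hbasis 0
  have h1 : (fun _ : ℕ => (0 : ℝ)) = a := hu _ (by simpa using tendsto_const_nhds)
  have h2 : (fun j : ℕ => if j = i then (1 : ℝ) else 0) = a := by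
    refine hu _ ?_
    have : ∀ n, ∑ l ∈ Finset.range n, (if l = i then (1:ℝ) else 0) • x l = 0 := by
      intro n
      refine Finset.sum_eq_zero fun l _ => ?_
      by_cases hl : l = i
      · subst hl; rw [h]; simp
      · simp [hl]
    simp only [this]
    exact tendsto_const_nhds
  have := congrFun (h1.trans h2.symm) i
  simp at this

lemma XL2Norm_tail_zero (x : ℕ → X) (a : ℕ → ℝ) (h : ∀ i, 1 ≤ i → a i = 0) :
    XL2Norm x a = 0 := by
  have hset : XL2Set x a = {0} := by
    ext r
    simp only [Set.mem_singleton_iff]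
    constructor
    · rintro ⟨k, hk, rfl⟩
      have hz : ∀ j, ‖∑ i ∈ Finset.Ioc (k j) (k (j + 1)), a i • x i‖ ^ 2 = 0 := by
        intro j
        have : ∑ i ∈ Finset.Ioc (k j) (k (j + 1)), a i • x i = 0 := by
          refine Finset.sum_eq_zero fun i hi => ?_
          have : k j < i := (Finset.mem_Ioc.mp hi).1
          rw [h i (by omega), zero_smul]
        rw [this]
        simp
      rw [tsum_congr hz, tsum_zero, Real.sqrt_zero]
    · rintro rfl
      refine ⟨id, strictMono_id, ?_⟩
      have hz : ∀ j : ℕ, ‖∑ i ∈ Finset.Ioc (id j) (id (j + 1)), a i • x i‖ ^ 2 = 0 := by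
        intro j
        have : ∑ i ∈ Finset.Ioc (id j) (id (j + 1)), a i • x i = 0 := by
          refine Finset.sum_eq_zero fun i hi => ?_
          have : j < i := (Finset.mem_Ioc.mp hi).1
          rw [h i (by omega), zero_smul]
        rw [this]
        simp
      rw [tsum_congr hz, tsum_zero, Real.sqrt_zero]
  rw [XL2Norm, hset, csSup_singleton]

lemma XL2Norm_smul_le (x : ℕ → X) (s : ℝ) (a : ℕ → ℝ) (ha : (Function.support a).Finite) :
    XL2Norm x (fun i => s * a i) ≤ |s| * XL2Norm x a := by
  refine Real.sSup_le ?_ (mul_nonneg (abs_nonneg s) (XL2Norm_nonneg x a ha))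
  rintro r ⟨k, hk, rfl⟩
  have hblk : ∀ j, ‖∑ i ∈ Finset.Ioc (k j) (k (j + 1)), (s * a i) • x i‖ ^ 2
      = s ^ 2 * ‖∑ i ∈ Finset.Ioc (k j) (k (j + 1)), a i • x i‖ ^ 2 := by
    intro j
    have : ∑ i ∈ Finset.Ioc (k j) (k (j + 1)), (s * a i) • x i
        = s • ∑ i ∈ Finset.Ioc (k j) (k (j + 1)), a i • x i := by
      rw [Finset.smul_sum]
      exact Finset.sum_congr rfl fun i _ => mul_smul s (a i) (x i)
    rw [this, norm_smul, Real.norm_eq_abs, mul_pow, sq_abs]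
  calc Real.sqrt (∑' j, ‖∑ i ∈ Finset.Ioc (k j) (k (j + 1)), (s * a i) • x i‖ ^ 2)
      = Real.sqrt (s ^ 2 * ∑' j, ‖∑ i ∈ Finset.Ioc (k j) (k (j + 1)), a i • x i‖ ^ 2) := by
        rw [tsum_congr hblk, tsum_mul_left]
    _ = |s| * Real.sqrt (∑' j, ‖∑ i ∈ Finset.Ioc (k j) (k (j + 1)), a i • x i‖ ^ 2) := by
        rw [Real.sqrt_mul (sq_nonneg s), Real.sqrt_sq_eq_abs]
    _ ≤ |s| * XL2Norm x a :=
        mul_le_mul_of_nonneg_left (le_XL2Norm x a ha ⟨k, hk, rfl⟩) (abs_nonneg s)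

lemma XL_dual_mem_zero (x : ℕ → X) (b : ℕ → ℝ) :
    (0:ℝ) ∈ { r | ∃ a : ℕ → ℝ, (Function.support a).Finite ∧ XL2Norm x a ≤ 1 ∧
      r = |∑' i : ℕ, b i * a i| } := by
  refine ⟨fun _ => 0, by simp, ?_, by simp⟩
  rw [XL2Norm_tail_zero x _ (fun i _ => rfl)]
  norm_num

lemma XL2DualNorm_nonneg (x : ℕ → X) (b : ℕ → ℝ) : 0 ≤ XL2DualNorm x b := by
  by_cases h : BddAbove { r | ∃ a : ℕ → ℝ, (Function.support a).Finite ∧ XL2Norm x a ≤ 1 ∧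
      r = |∑' i : ℕ, b i * a i| }
  · exact le_csSup h (XL_dual_mem_zero x b)
  · rw [XL2DualNorm, Real.sSup_of_not_bddAbove h]

lemma XL_dual_bddAbove (x : ℕ → X) (hx : ∀ i, x i ≠ 0) (b : ℕ → ℝ)
    (hb : (Function.support b).Finite) (hb0 : b 0 = 0) :
    BddAbove { r | ∃ a : ℕ → ℝ, (Function.support a).Finite ∧ XL2Norm x a ≤ 1 ∧
      r = |∑' i : ℕ, b i * a i| } := by
  refine ⟨∑ i ∈ hb.toFinset, |b i| * ‖x i‖⁻¹, ?_⟩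
  rintro r ⟨a, ha, hna, rfl⟩
  have h1 : ∑' i, b i * a i = ∑ i ∈ hb.toFinset, b i * a i := by
    refine tsum_eq_sum fun i hi => ?_
    have : b i = 0 := by
      by_contra h
      exact hi (by simpa [Function.mem_support] using h)
    simp [this]
  rw [h1]
  calc |∑ i ∈ hb.toFinset, b i * a i| ≤ ∑ i ∈ hb.toFinset, |b i * a i| :=
        Finset.abs_sum_le_sum_abs _ _
    _ ≤ ∑ i ∈ hb.toFinset, |b i| * ‖x i‖⁻¹ := by
        refine Finset.sum_le_sum fun i hi => ?_
        rw [abs_mul]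
        refine mul_le_mul_of_nonneg_left ?_ (abs_nonneg _)
        have hbi : b i ≠ 0 := by simpa [Function.mem_support] using hi
        have hi1 : 1 ≤ i := by
          rcases Nat.eq_zero_or_pos i with rfl | h
          · exact absurd hb0 hbi
          · exact h
        have hle : |a i| * ‖x i‖ ≤ 1 := (XL_single_le x a ha hi1).trans hna
        have hxpos : (0:ℝ) < ‖x i‖ := norm_pos_iff.mpr (hx i)
        rw [inv_eq_one_div, le_div_iff₀ hxpos]
        exact hle

lemma XL_pairing (x : ℕ → X) (hx : ∀ i, x i ≠ 0) (b : ℕ → ℝ)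
    (hb : (Function.support b).Finite) (hb0 : b 0 = 0)
    (a : ℕ → ℝ) (ha : (Function.support a).Finite) :
    |∑' i, b i * a i| ≤ XL2DualNorm x b * XL2Norm x a := by
  rcases eq_or_lt_of_le (XL2Norm_nonneg x a ha) with h0 | hpos
  · have hz : ∀ i, 1 ≤ i → a i = 0 := by
      intro i hi
      have h1 := XL_single_le x a ha hi
      have hxpos : (0:ℝ) < ‖x i‖ := norm_pos_iff.mpr (hx i)
      have : |a i| = 0 := by nlinarith [abs_nonneg (a i)]
      exact abs_eq_zero.mp this
    have hpt : ∀ i, b i * a i = 0 := by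
      intro i
      rcases Nat.eq_zero_or_pos i with rfl | hi
      · simp [hb0]
      · simp [hz i hi]
    rw [tsum_congr hpt, tsum_zero, abs_zero, ← h0, mul_zero]
  · set t := XL2Norm x a with ht
    set a' : ℕ → ℝ := fun i => t⁻¹ * a i with ha'def
    have ha'f : (Function.support a').Finite := by
      refine ha.subset fun i hi => ?_
      simp only [Function.mem_support, ha'def] at hi ⊢
      intro h
      exact hi (by rw [h, mul_zero])
    have hn' : XL2Norm x a' ≤ 1 := by
      refine (XL2Norm_smul_le x t⁻¹ a ha).trans ?_
      rw [abs_of_pos (inv_pos.mpr hpos), inv_mul_cancel₀ hpos.ne']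
    have hle : |∑' i, b i * a' i| ≤ XL2DualNorm x b :=
      le_csSup (XL_dual_bddAbove x hx b hb hb0) ⟨a', ha'f, hn', rfl⟩
    have heq : ∑' i, b i * a' i = t⁻¹ * ∑' i, b i * a i := by
      rw [← tsum_mul_left]
      exact tsum_congr fun i => by simp only [ha'def]; ring
    rw [heq, abs_mul, abs_of_pos (inv_pos.mpr hpos)] at hle
    rw [inv_mul_le_iff₀ hpos] at hle
    calc |∑' i, b i * a i| ≤ t * XL2DualNorm x b := hle
      _ = XL2DualNorm x b * t := mul_comm _ _

lemma XL_mem_XL2Set_iff {x : ℕ → X} {a : ℕ → ℝ} {r : ℝ} :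
    r ∈ XL2Set x a ↔ ∃ k : ℕ → ℕ, StrictMono k ∧ r = Real.sqrt (∑' j, XLblk x a k j) :=
  Iff.rfl

lemma XL_combine (x : ℕ → X) (a a₁ a₂ : ℕ → ℝ) (ha : (Function.support a).Finite) (N : ℕ)
    (h1 : ∀ i, i ≤ N → a₁ i = a i) (h1' : ∀ i, N < i → a₁ i = 0)
    (h2 : ∀ i, i ≤ N → a₂ i = 0) (h2' : ∀ i, N < i → a₂ i = a i)
    {r₁ r₂ : ℝ} (hr₁ : r₁ ∈ XL2Set x a₁) (hr₂ : r₂ ∈ XL2Set x a₂) :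
    r₁ ^ 2 + r₂ ^ 2 ≤ XL2Norm x a ^ 2 := by
  rw [XL_mem_XL2Set_iff] at hr₁ hr₂
  obtain ⟨k₁, hk₁, rfl⟩ := hr₁
  obtain ⟨k₂, hk₂, rfl⟩ := hr₂
  obtain ⟨P, hP⟩ := XL_exists_bound ha
  have hP2 : ∀ i, max P (N+1) ≤ i → a₂ i = 0 := fun i hi => by
    rw [h2' i (by omega)]; exact hP i (by omega)
  -- the two cut indices
  have hj₀ex : ∃ j, N ≤ k₁ j := ⟨N, hk₁.le_apply⟩
  have hj₁ex : ∃ j, N < k₂ j := ⟨N + 1, lt_of_lt_of_le (by omega) hk₂.le_apply⟩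
  set j₀ := Nat.find hj₀ex with hj₀def
  set j₁ := Nat.find hj₁ex with hj₁def
  have hj₀ : N ≤ k₁ j₀ := Nat.find_spec hj₀ex
  have hj₀min : ∀ j < j₀, k₁ j < N := fun j hj => lt_of_not_ge (Nat.find_min hj₀ex hj)
  have hj₁ : N < k₂ j₁ := Nat.find_spec hj₁ex
  have hj₁min : ∀ j < j₁, k₂ j ≤ N := fun j hj => le_of_not_gt (Nat.find_min hj₁ex hj)
  -- combined partition
  set κ : ℕ → ℕ := fun j => if j < j₀ then k₁ j else if j = j₀ then N else k₂ (j₁ + (j - j₀ - 1))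
    with hκdef
  have hκval1 : ∀ j, j < j₀ → κ j = k₁ j := fun j hj => by simp only [hκdef, if_pos hj]
  have hκval2 : κ j₀ = N := by
    simp [hκdef]
  have hκval3 : ∀ t, κ (j₀ + 1 + t) = k₂ (j₁ + t) := fun t => by
    have h1 : ¬ (j₀ + 1 + t < j₀) := by omega
    have h2 : ¬ (j₀ + 1 + t = j₀) := by omega
    simp only [hκdef, if_neg h1, if_neg h2]
    congr 1
    omega
  have hκs : StrictMono κ := by
    refine strictMono_nat_of_lt_succ fun j => ?_
    rcases lt_trichotomy (j+1) j₀ with hA | hA | hA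
    · rw [hκval1 j (by omega), hκval1 (j+1) hA]
      exact hk₁ (lt_add_one j)
    · have e1 : κ j = k₁ j := hκval1 j (by omega)
      have e2 : κ (j + 1) = N := by rw [hA]; exact hκval2
      rw [e1, e2]
      exact hj₀min j (by omega)
    · rcases Nat.eq_or_lt_of_le (by omega : j₀ ≤ j) with hB | hB
      · have e1 : κ j = N := hB ▸ hκval2
        have e2 : κ (j + 1) = k₂ j₁ := by
          have : j + 1 = j₀ + 1 + 0 := by omega
          rw [this, hκval3 0, Nat.add_zero]
        rw [e1, e2]
        exact hj₁
      · have e1 : κ j = k₂ (j₁ + (j - j₀ - 1)) := by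
          conv_lhs => rw [show j = j₀ + 1 + (j - j₀ - 1) from by omega]
          rw [hκval3]
        have e2 : κ (j + 1) = k₂ (j₁ + (j - j₀)) := by
          conv_lhs => rw [show j + 1 = j₀ + 1 + (j - j₀) from by omega]
          rw [hκval3]
        rw [e1, e2]
        exact hk₂ (by omega)
  -- block facts
  have hF1 : ∀ j, j < j₀ → XLblk x a κ j = XLblk x a₁ k₁ j := by
    intro j hj
    rcases lt_or_eq_of_le (Nat.succ_le_of_lt hj) with h | h
    · have e1 : κ j = k₁ j := hκval1 j hj
      have e2 : κ (j+1) = k₁ (j+1) := hκval1 _ h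
      simp only [XLblk, XLS, e1, e2]
      refine congrArg (fun v : X => ‖v‖ ^ 2) (Finset.sum_congr rfl fun i hi => ?_)
      have hiN : i ≤ N := le_of_lt (lt_of_le_of_lt (Finset.mem_Ioc.mp hi).2 (hj₀min _ h))
      rw [h1 i hiN]
    · have e1 : κ j = k₁ j := hκval1 j hj
      have h' : j + 1 = j₀ := by omega
      have e2 : κ (j+1) = N := by rw [h']; exact hκval2
      have hle1 : k₁ j ≤ N := (hj₀min j hj).le
      have hle2 : N ≤ k₁ (j+1) := by rw [h']; exact hj₀
      have esum : ∑ i ∈ Ioc (k₁ j) (k₁ (j+1)), a₁ i • x i = ∑ i ∈ Ioc (k₁ j) N, a i • x i := by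
        rw [← Finset.sum_Ioc_consecutive (fun i => a₁ i • x i) hle1 hle2]
        have ez : ∑ i ∈ Ioc N (k₁ (j+1)), a₁ i • x i = 0 :=
          Finset.sum_eq_zero fun i hi => by rw [h1' i (Finset.mem_Ioc.mp hi).1, zero_smul]
        rw [ez, add_zero]
        exact Finset.sum_congr rfl fun i hi => by rw [h1 i (Finset.mem_Ioc.mp hi).2]
      simp only [XLblk, XLS, e1, e2]
      rw [esum]
  have hF2 : ∀ j, j₀ ≤ j → XLblk x a₁ k₁ j = 0 := by
    intro j hj
    have hz : ∑ i ∈ Ioc (k₁ j) (k₁ (j+1)), a₁ i • x i = 0 := by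
      refine Finset.sum_eq_zero fun i hi => ?_
      have h1i : k₁ j < i := (Finset.mem_Ioc.mp hi).1
      have h2i : k₁ j₀ ≤ k₁ j := hk₁.monotone hj
      rw [h1' i (by omega), zero_smul]
    simp [XLblk, XLS, hz]
  have hF3 : ∀ t, XLblk x a κ (j₀ + 1 + t) = XLblk x a₂ k₂ (j₁ + t) := by
    intro t
    have e1 : κ (j₀ + 1 + t) = k₂ (j₁ + t) := hκval3 t
    have e2 : κ (j₀ + 1 + t + 1) = k₂ (j₁ + t + 1) := by
      have h' : j₀ + 1 + t + 1 = j₀ + 1 + (t + 1) := by omega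
      rw [h', hκval3 (t+1), Nat.add_assoc]
    simp only [XLblk, XLS, e1, e2]
    refine congrArg (fun v : X => ‖v‖ ^ 2) (Finset.sum_congr rfl fun i hi => ?_)
    have hNi : N < i := by
      have h1i : k₂ (j₁ + t) < i := (Finset.mem_Ioc.mp hi).1
      have h2i : k₂ j₁ ≤ k₂ (j₁ + t) := hk₂.monotone (by omega)
      omega
    rw [h2' i hNi]
  have hF4 : ∀ j, j + 1 < j₁ → XLblk x a₂ k₂ j = 0 := by
    intro j hj
    have hz : ∑ i ∈ Ioc (k₂ j) (k₂ (j+1)), a₂ i • x i = 0 := by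
      refine Finset.sum_eq_zero fun i hi => ?_
      have h2i : i ≤ k₂ (j+1) := (Finset.mem_Ioc.mp hi).2
      have h3i : k₂ (j+1) ≤ N := hj₁min _ hj
      rw [h2 i (by omega), zero_smul]
    simp [XLblk, XLS, hz]
  have hF5 : 1 ≤ j₁ → XLblk x a₂ k₂ (j₁ - 1) = XLblk x a κ j₀ := by
    intro hj₁1
    have e0 : κ (j₀ + 1) = k₂ j₁ := by
      have := hκval3 0
      simpa using this
    have e1 : (j₁ - 1) + 1 = j₁ := by omega
    have hle1 : k₂ (j₁ - 1) ≤ N := hj₁min _ (by omega)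
    have hle2 : N ≤ k₂ j₁ := hj₁.le
    have esum : ∑ i ∈ Ioc (k₂ (j₁-1)) (k₂ ((j₁-1)+1)), a₂ i • x i
        = ∑ i ∈ Ioc N (k₂ j₁), a i • x i := by
      rw [e1, ← Finset.sum_Ioc_consecutive (fun i => a₂ i • x i) hle1 hle2]
      have ez : ∑ i ∈ Ioc (k₂ (j₁-1)) N, a₂ i • x i = 0 :=
        Finset.sum_eq_zero fun i hi => by rw [h2 i (Finset.mem_Ioc.mp hi).2, zero_smul]
      rw [ez, zero_add]
      exact Finset.sum_congr rfl fun i hi => by rw [h2' i (Finset.mem_Ioc.mp hi).1]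
    simp only [XLblk, XLS, hκval2, e0]
    rw [esum]
  -- summability
  have hS2 : Summable (XLblk x a₂ k₂) := XL_summable_blk x a₂ k₂ hk₂ hP2
  have hSa : Summable (XLblk x a κ) := XL_summable_blk x a κ hκs hP
  have hT1 : ∑' j, XLblk x a₁ k₁ j = ∑ j ∈ range j₀, XLblk x a κ j := by
    rw [tsum_eq_sum (s := range j₀) fun j hj => hF2 j (by simpa using hj)]
    exact Finset.sum_congr rfl fun j hj => (hF1 j (mem_range.mp hj)).symm
  have hT2 : ∑' (t:ℕ), XLblk x a₂ k₂ (t + j₁) = ∑' (t:ℕ), XLblk x a κ (t + (j₀ + 1)) := by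
    refine tsum_congr fun t => ?_
    rw [Nat.add_comm t j₁, Nat.add_comm t (j₀ + 1)]
    exact (hF3 t).symm
  have hmid : ∑ j ∈ range j₁, XLblk x a₂ k₂ j ≤ XLblk x a κ j₀ := by
    rcases Nat.eq_zero_or_pos j₁ with h | h
    · rw [h]
      simpa using XLblk_nonneg x a κ j₀
    · have heq : ∑ j ∈ range j₁, XLblk x a₂ k₂ j = XLblk x a₂ k₂ (j₁ - 1) := by
        refine Finset.sum_eq_single_of_mem (j₁ - 1) (mem_range.mpr (by omega)) fun j hj hne => ?_
        exact hF4 j (by have := mem_range.mp hj; omega)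
      rw [heq, hF5 h]
  have hA : ∑' j, XLblk x a₁ k₁ j + ∑' j, XLblk x a₂ k₂ j ≤ ∑' j, XLblk x a κ j := by
    have d2 := (Summable.sum_add_tsum_nat_add (f := XLblk x a₂ k₂) j₁ hS2).symm
    have da := (Summable.sum_add_tsum_nat_add (f := XLblk x a κ) (j₀ + 1) hSa).symm
    rw [hT1, d2, da, Finset.sum_range_succ, ← hT2]
    linarith [hmid]
  have hnn1 : 0 ≤ ∑' j, XLblk x a₁ k₁ j := tsum_nonneg fun j => XLblk_nonneg x a₁ k₁ j
  have hnn2 : 0 ≤ ∑' j, XLblk x a₂ k₂ j := tsum_nonneg fun j => XLblk_nonneg x a₂ k₂ j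
  have hnna : 0 ≤ ∑' j, XLblk x a κ j := tsum_nonneg fun j => XLblk_nonneg x a κ j
  have hmem : Real.sqrt (∑' j, XLblk x a κ j) ∈ XL2Set x a := ⟨κ, hκs, rfl⟩
  have hle := le_XL2Norm x a ha hmem
  calc Real.sqrt (∑' j, XLblk x a₁ k₁ j) ^ 2 + Real.sqrt (∑' j, XLblk x a₂ k₂ j) ^ 2
      = ∑' j, XLblk x a₁ k₁ j + ∑' j, XLblk x a₂ k₂ j := by
        rw [Real.sq_sqrt hnn1, Real.sq_sqrt hnn2]
    _ ≤ ∑' j, XLblk x a κ j := hA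
    _ = Real.sqrt (∑' j, XLblk x a κ j) ^ 2 := (Real.sq_sqrt hnna).symm
    _ ≤ XL2Norm x a ^ 2 := pow_le_pow_left₀ (Real.sqrt_nonneg _) hle 2

lemma XL_sup_sq_add (x : ℕ → X) (a a₁ a₂ : ℕ → ℝ) (ha : (Function.support a).Finite) (N : ℕ)
    (h1 : ∀ i, i ≤ N → a₁ i = a i) (h1' : ∀ i, N < i → a₁ i = 0)
    (h2 : ∀ i, i ≤ N → a₂ i = 0) (h2' : ∀ i, N < i → a₂ i = a i)
    (ha₁ : (Function.support a₁).Finite) (ha₂ : (Function.support a₂).Finite) :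
    XL2Norm x a₁ ^ 2 + XL2Norm x a₂ ^ 2 ≤ XL2Norm x a ^ 2 := by
  set M := XL2Norm x a ^ 2 with hM
  have hkey : ∀ r₁ ∈ XL2Set x a₁, ∀ r₂ ∈ XL2Set x a₂, r₁ ^ 2 + r₂ ^ 2 ≤ M :=
    fun r₁ hr₁ r₂ hr₂ => XL_combine x a a₁ a₂ ha N h1 h1' h2 h2' hr₁ hr₂
  obtain ⟨ρ, hρ⟩ := XL2Set_nonempty x a₂
  obtain ⟨σ, hσ⟩ := XL2Set_nonempty x a₁
  have hstep : ∀ r₂ ∈ XL2Set x a₂, XL2Norm x a₁ ^ 2 + r₂ ^ 2 ≤ M := by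
    intro r₂ hr₂
    have h0 : 0 ≤ M - r₂ ^ 2 := by
      have := hkey σ hσ r₂ hr₂
      nlinarith [sq_nonneg σ]
    have hs1 : XL2Norm x a₁ ≤ Real.sqrt (M - r₂ ^ 2) := by
      refine Real.sSup_le (fun r₁ hr₁ => ?_) (Real.sqrt_nonneg _)
      exact (Real.le_sqrt (XL2Set_mem_nonneg hr₁) h0).mpr (by linarith [hkey r₁ hr₁ r₂ hr₂])
    have := pow_le_pow_left₀ (XL2Norm_nonneg x a₁ ha₁) hs1 2
    rw [Real.sq_sqrt h0] at this
    linarith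
  have h0' : 0 ≤ M - XL2Norm x a₁ ^ 2 := by
    have := hstep ρ hρ
    nlinarith [sq_nonneg ρ]
  have hs2 : XL2Norm x a₂ ≤ Real.sqrt (M - XL2Norm x a₁ ^ 2) := by
    refine Real.sSup_le (fun r₂ hr₂ => ?_) (Real.sqrt_nonneg _)
    exact (Real.le_sqrt (XL2Set_mem_nonneg hr₂) h0').mpr (by linarith [hstep r₂ hr₂])
  have := pow_le_pow_left₀ (XL2Norm_nonneg x a₂ ha₂) hs2 2
  rw [Real.sq_sqrt h0'] at this
  linarith


end XL2Aux

/-- If `x*`, `y*` are finite linear combinations of the coordinate functionals `(eᵢ*)` on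
`X^{ℓ₂}` with `max supp x* < min supp y*`, then `‖x* + y*‖² ≤ ‖x*‖² + ‖y*‖²`. -/
theorem xl2_dual_succ_sq {X : Type*} [NormedAddCommGroup X] [NormedSpace ℝ X]
    [CompleteSpace X] (x : ℕ → X)
    (hbasis : IsSchauderBasis x) (hshrink : IsShrinkingBasis x)
    (b c : ℕ → ℝ) (hb : (Function.support b).Finite) (hc : (Function.support c).Finite)
    (hlt : ∀ i j : ℕ, b i ≠ 0 → c j ≠ 0 → i < j) :
    XL2DualNorm x (b + c) ^ 2 ≤ XL2DualNorm x b ^ 2 + XL2DualNorm x c ^ 2 := by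
  classical
  by_cases hbz : b = 0
  · rw [hbz, zero_add]
    nlinarith [sq_nonneg (XL2DualNorm x (0 : ℕ → ℝ)), sq_nonneg (XL2DualNorm x c)]
  · have hx : ∀ i, x i ≠ 0 := XL_basis_ne_zero hbasis
    obtain ⟨i₀, hi₀⟩ : ∃ i, b i ≠ 0 := by
      by_contra h
      push_neg at h
      exact hbz (funext h)
    have hc0 : c 0 = 0 := by
      by_contra h
      exact absurd (hlt i₀ 0 hi₀ h) (by omega)
    by_cases hb0 : b 0 = 0
    · -- main case
      have hne : hb.toFinset.Nonempty := ⟨i₀, by simp [Function.mem_support, hi₀]⟩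
      set N := hb.toFinset.max' hne with hN
      have hNmem : b N ≠ 0 := by
        have := hb.toFinset.max'_mem hne
        simpa [Function.mem_support] using this
      have hbN : ∀ i, b i ≠ 0 → i ≤ N :=
        fun i hi => Finset.le_max' _ i (by simp [Function.mem_support, hi])
      have hcN : ∀ j, c j ≠ 0 → N < j := fun j hj => hlt N j hNmem hj
      set dB := XL2DualNorm x b with hdB
      set dC := XL2DualNorm x c with hdC
      have hdB0 : 0 ≤ dB := XL2DualNorm_nonneg x b
      have hdC0 : 0 ≤ dC := XL2DualNorm_nonneg x c
      have hkey : ∀ r ∈ { r | ∃ a : ℕ → ℝ, (Function.support a).Finite ∧ XL2Norm x a ≤ 1 ∧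
          r = |∑' i : ℕ, (b + c) i * a i| }, r ≤ Real.sqrt (dB ^ 2 + dC ^ 2) := by
        rintro r ⟨a, ha, hna, rfl⟩
        set a₁ : ℕ → ℝ := fun i => if i ≤ N then a i else 0 with ha₁def
        set a₂ : ℕ → ℝ := fun i => if i ≤ N then 0 else a i with ha₂def
        have ha₁ : (Function.support a₁).Finite := by
          refine ha.subset fun i hi => ?_
          simp only [Function.mem_support, ha₁def] at hi ⊢
          intro h
          apply hi
          split <;> simp [h]
        have ha₂ : (Function.support a₂).Finite := by
          refine ha.subset fun i hi => ?_
          simp only [Function.mem_support, ha₂def] at hi ⊢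
          intro h
          apply hi
          split <;> simp [h]
        have hS1 : Summable (fun i => b i * a₁ i) := by
          refine summable_of_ne_finset_zero (s := hb.toFinset) fun i hi => ?_
          have : b i = 0 := by
            by_contra h
            exact hi (by simpa [Function.mem_support] using h)
          simp [this]
        have hS2 : Summable (fun i => c i * a₂ i) := by
          refine summable_of_ne_finset_zero (s := hc.toFinset) fun i hi => ?_
          have : c i = 0 := by
            by_contra h
            exact hi (by simpa [Function.mem_support] using h)
          simp [this]
        have hpt : ∀ i, (b + c) i * a i = b i * a₁ i + c i * a₂ i := by
          intro i
          by_cases h : i ≤ N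
          · have hci : c i = 0 := by
              by_contra hcc
              exact absurd (hcN i hcc) (by omega)
            simp only [Pi.add_apply, ha₁def, ha₂def, if_pos h, hci]
            ring
          · have hbi : b i = 0 := by
              by_contra hbb
              exact h (hbN i hbb)
            simp only [Pi.add_apply, ha₁def, ha₂def, if_neg h, hbi]
            ring
        have hsplit : ∑' i, (b + c) i * a i = (∑' i, b i * a₁ i) + ∑' i, c i * a₂ i := by
          rw [tsum_congr hpt, Summable.tsum_add hS1 hS2]
        have hp1 : |∑' i, b i * a₁ i| ≤ dB * XL2Norm x a₁ := XL_pairing x hx b hb hb0 a₁ ha₁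
        have hp2 : |∑' i, c i * a₂ i| ≤ dC * XL2Norm x a₂ := XL_pairing x hx c hc hc0 a₂ ha₂
        set t₁ := XL2Norm x a₁ with ht₁
        set t₂ := XL2Norm x a₂ with ht₂
        have ht₁0 : 0 ≤ t₁ := XL2Norm_nonneg x a₁ ha₁
        have ht₂0 : 0 ≤ t₂ := XL2Norm_nonneg x a₂ ha₂
        have hB : t₁ ^ 2 + t₂ ^ 2 ≤ XL2Norm x a ^ 2 :=
          XL_sup_sq_add x a a₁ a₂ ha N (fun i h => if_pos h) (fun i h => if_neg (by omega))
            (fun i h => if_pos h) (fun i h => if_neg (by omega)) ha₁ ha₂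
        have hna2 : XL2Norm x a ^ 2 ≤ 1 := by
          have h0 := XL2Norm_nonneg x a ha
          nlinarith
        have h11 : t₁ ^ 2 + t₂ ^ 2 ≤ 1 := hB.trans hna2
        have hr : |∑' i, (b + c) i * a i| ≤ dB * t₁ + dC * t₂ := by
          rw [hsplit]
          exact (abs_add_le _ _).trans (add_le_add hp1 hp2)
        have hfin : dB * t₁ + dC * t₂ ≤ Real.sqrt (dB ^ 2 + dC ^ 2) := by
          refine (Real.le_sqrt (add_nonneg (mul_nonneg hdB0 ht₁0) (mul_nonneg hdC0 ht₂0))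
            (by positivity)).mpr ?_
          nlinarith [sq_nonneg (dB * t₂ - dC * t₁), mul_nonneg (mul_nonneg hdB0 ht₁0) (mul_nonneg hdC0 ht₂0)]
        exact hr.trans hfin
      have hle : XL2DualNorm x (b + c) ≤ Real.sqrt (dB ^ 2 + dC ^ 2) :=
        Real.sSup_le hkey (Real.sqrt_nonneg _)
      have := pow_le_pow_left₀ (XL2DualNorm_nonneg x (b + c)) hle 2
      rwa [Real.sq_sqrt (by positivity)] at this
    · -- b 0 ≠ 0 : the dual set of b + c is unbounded, so its sSup is 0
      have hsum0 : XL2DualNorm x (b + c) = 0 := by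
        apply Real.sSup_of_not_bddAbove
        rintro ⟨M, hM⟩
        set β := b 0 + c 0 with hβ
        have hβ0 : β ≠ 0 := by
          rw [hβ, hc0, add_zero]
          exact hb0
        have hβpos : 0 < |β| := abs_pos.mpr hβ0
        set t : ℝ := (|M| + 1) / |β| with htdef
        set a : ℕ → ℝ := fun i => if i = 0 then t else 0 with hadef
        have h1 : (Function.support a).Finite := by
          refine (Set.finite_singleton 0).subset fun i hi => ?_
          simp only [Function.mem_support, hadef] at hi
          by_contra h
          simp only [Set.mem_singleton_iff] at h
          exact hi (if_neg h)
        have h2 : XL2Norm x a ≤ 1 := by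
          rw [XL2Norm_tail_zero x a (fun i hi => if_neg (by omega))]
          norm_num
        have h3 : ∑' i, (b + c) i * a i = β * t := by
          rw [tsum_eq_sum (s := {0}) (fun i hi => by
            simp only [Finset.mem_singleton] at hi
            simp [hadef, if_neg hi])]
          simp [hadef, hβ]
        have hmem : |β * t| ∈ { r | ∃ a : ℕ → ℝ, (Function.support a).Finite ∧
            XL2Norm x a ≤ 1 ∧ r = |∑' i : ℕ, (b + c) i * a i| } := ⟨a, h1, h2, by rw [h3]⟩
        have hMle := hM hmem
        have habs : |β * t| = |M| + 1 := by
          rw [abs_mul, htdef, abs_div, abs_abs]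
          rw [abs_of_nonneg (by positivity : (0:ℝ) ≤ |M| + 1)]
          field_simp
        rw [habs] at hMle
        have := le_abs_self M
        linarith
      rw [hsum0]
      nlinarith [sq_nonneg (XL2DualNorm x b), sq_nonneg (XL2DualNorm x c)]
end

section
/- Let $X$ be a Banach space with a normalized Schauder basis $(x_i)$ with bimonotonicity constant $C$, and let $X^{\ell_2}$ be as above. Then for every $x = \sum_{i=1}^\infty a_i e_i \in X^{\ell_2}$ and every $\varepsilon > 0$, there exist $n \in \mathbb{N}$, integers $0 = k_0 < k_1 < \cdots < k_n$, and functionals $y_1^*, \ldots, y_n^* \in X^*$ with $\mathrm{supp}(y_i^*) \subset (k_{i-1}, k_i]$ and $\sum_{i=1}^n \|y_i^*\|_{X^*}^2 \leq 1$, such that $\sum_{i=1}^n y_i^*(\sum_{j=k_{i-1}+1}^{k_i} a_j x_j) \geq (\|x\|_{X^{\ell_2}} - \varepsilon)/C$. In particular, the set $K$ of functionals of the form $\sum_i I^* y_i^*$ with $(y_i^*)$ successively supported blocks in $B_{\ell_2(X^*)}$ is $1/C$-norming for $X^{\ell_2}$. -/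
open NormedSpace

open Filter

private lemma schauder_li {X : Type*} [NormedAddCommGroup X] [NormedSpace ℝ X] (x : ℕ → X)
    (hbasis : IsSchauderBasis x) : LinearIndependent ℝ x := by
  classical
  rw [linearIndependent_iff']
  intro s g hsum i hi
  set a : ℕ → ℝ := fun j => if j ∈ s then g j else 0 with hadef
  obtain ⟨a₀, _, hauniq⟩ := hbasis 0
  have h1 : Tendsto (fun n => ∑ i ∈ Finset.range n, a i • x i) atTop (nhds 0) := by
    apply Tendsto.congr' _ (tendsto_const_nhds (x := (0:X)))
    filter_upwards [eventually_ge_atTop (s.sup id + 1)] with n hn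
    have hsub : s ⊆ Finset.range n := fun j hj =>
      Finset.mem_range.mpr (lt_of_le_of_lt (Finset.le_sup (f := id) hj) (by omega))
    have : ∑ j ∈ s, a j • x j = ∑ j ∈ Finset.range n, a j • x j :=
      Finset.sum_subset hsub (fun j _ hj => by simp [hadef, hj])
    rw [← this]
    have : ∑ j ∈ s, a j • x j = ∑ j ∈ s, g j • x j :=
      Finset.sum_congr rfl (fun j hj => by simp [hadef, hj])
    rw [this, hsum]
  have h2 : Tendsto (fun n => ∑ i ∈ Finset.range n, (0:ℝ) • x i) atTop (nhds 0) := by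
    simp [tendsto_const_nhds]
  have ha : a = a₀ := hauniq a h1
  have h0 : (fun _ : ℕ => (0:ℝ)) = a₀ := hauniq _ h2
  have : a i = 0 := by rw [ha, ← h0]
  simpa [hadef, hi] using this

private lemma key_functional {X : Type*} [NormedAddCommGroup X] [NormedSpace ℝ X]
    (x : ℕ → X) (hli : LinearIndependent ℝ x)
    (C : ℝ) (hC : 1 ≤ C)
    (hbimono : ∀ (s : Finset ℕ) (a : ℕ → ℝ) (p q : ℕ),
      ‖∑ i ∈ s.filter (fun i => p < i ∧ i ≤ q), a i • x i‖ ≤ C * ‖∑ i ∈ s, a i • x i‖)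
    (a : ℕ → ℝ) (p q : ℕ) :
    ∃ g : StrongDual ℝ X, (∀ j, ¬(p < j ∧ j ≤ q) → g (x j) = 0) ∧ ‖g‖ ≤ C ∧
      g (∑ j ∈ Finset.Ioc p q, a j • x j) = ‖∑ j ∈ Finset.Ioc p q, a j • x j‖ := by
  classical
  set v := ∑ j ∈ Finset.Ioc p q, a j • x j with hv
  by_cases hv0 : v = 0
  · exact ⟨0, fun j _ => rfl, by simp; linarith, by simp [hv0]⟩
  obtain ⟨f, hf1, hf2⟩ := exists_dual_vector ℝ v (norm_ne_zero_iff.mpr hv0)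
  set M := Submodule.span ℝ (Set.range x) with hM
  let bS : Module.Basis ℕ ℝ M := Module.Basis.span hli
  set val : ℕ → ℝ := fun j => if p < j ∧ j ≤ q then f (x j) else 0 with hval
  let l₀ : M →ₗ[ℝ] ℝ := bS.constr ℝ val
  have hl₀ : ∀ j, l₀ (bS j) = val j := fun j => Module.Basis.constr_basis bS ℝ val j
  have hbSj : ∀ j, (bS j : X) = x j := fun j => congrArg Subtype.val (Module.Basis.span_apply hli j)
  -- computation on finite sums
  have hcomp : ∀ (s : Finset ℕ) (c : ℕ → ℝ) (w : M), ((w : X) = ∑ i ∈ s, c i • x i) →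
      l₀ w = ∑ i ∈ s, c i * val i := by
    intro s c w hw
    have : w = ∑ i ∈ s, c i • bS i := by
      apply Subtype.ext
      rw [hw]
      push_cast
      exact Finset.sum_congr rfl fun i _ => by rw [hbSj]
    rw [this, map_sum]
    exact Finset.sum_congr rfl fun i _ => by rw [map_smul, hl₀]; simp [smul_eq_mul]
  have hbound : ∀ w : M, ‖l₀ w‖ ≤ C * ‖w‖ := by
    intro w
    obtain ⟨c, hc⟩ := Finsupp.mem_span_range_iff_exists_finsupp.mp w.2
    have hc' : (w : X) = ∑ i ∈ c.support, c i • x i := by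
      rw [← hc]; rfl
    rw [hcomp c.support c w hc']
    have h2 : ∑ i ∈ c.support, c i * val i
        = f (∑ i ∈ c.support.filter (fun i => p < i ∧ i ≤ q), c i • x i) := by
      rw [map_sum, Finset.sum_filter]
      refine Finset.sum_congr rfl fun i _ => ?_
      simp only [hval, mul_ite, mul_zero, map_smul, smul_eq_mul]
    rw [h2]
    calc ‖f _‖ ≤ ‖f‖ * ‖∑ i ∈ c.support.filter (fun i => p < i ∧ i ≤ q), c i • x i‖ :=
          f.le_opNorm _
      _ ≤ 1 * (C * ‖∑ i ∈ c.support, c i • x i‖) := by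
          rw [hf1]; exact mul_le_mul_of_nonneg_left (hbimono c.support c p q) zero_le_one
      _ = C * ‖w‖ := by rw [one_mul, ← hc']; rfl
  let L : M →L[ℝ] ℝ := l₀.mkContinuous C hbound
  obtain ⟨g, hg1, hg2⟩ := exists_extension_norm_eq M L
  have hLl₀ : ∀ w : M, L w = l₀ w := fun w => rfl
  refine ⟨g, ?_, ?_, ?_⟩
  · intro j hj
    have hxj : x j ∈ M := Submodule.subset_span ⟨j, rfl⟩
    have hbj : bS j = ⟨x j, hxj⟩ := Subtype.ext (hbSj j)
    have h : g (x j) = l₀ ⟨x j, hxj⟩ := hg1 ⟨x j, hxj⟩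
    rw [h, ← hbj, hl₀, hval]
    simp [hj]
  · rw [hg2]
    exact l₀.mkContinuous_norm_le (le_trans zero_le_one hC) hbound
  · have hvM : v ∈ M := by
      rw [hv]
      exact Submodule.sum_mem _ fun j _ =>
        Submodule.smul_mem _ _ (Submodule.subset_span ⟨j, rfl⟩)
    have := hg1 ⟨v, hvM⟩
    rw [hLl₀, hcomp (Finset.Ioc p q) a ⟨v, hvM⟩ rfl] at this
    rw [this]
    have : ∑ i ∈ Finset.Ioc p q, a i * val i = f v := by
      rw [hv, map_sum]
      refine Finset.sum_congr rfl fun i hi => ?_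
      rw [hval, map_smul]
      simp only [Finset.mem_Ioc] at hi
      simp [hi, smul_eq_mul]
    rw [this, hf2]
    simp

/-- The Hahn–Banach step in the proof that the set `K` of images of successively supported
blocks of functionals is `1/C`-norming for `X^{ℓ₂}`: for any `x = ∑ aᵢ eᵢ ∈ X^{ℓ₂}` and
`ε > 0`, there are `0 = k₀ < k₁ < ⋯ < kₙ` and functionals `yᵢ*` supported in
`(k_{i-1}, k_i]` with `∑ ‖yᵢ*‖² ≤ 1` and
`∑ᵢ yᵢ*(∑_{j=k_{i-1}+1}^{k_i} a_j x_j) ≥ (‖x‖_{X^{ℓ₂}} - ε)/C`. -/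
theorem xl2_norming_functionals {X : Type*} [NormedAddCommGroup X] [NormedSpace ℝ X]
    [CompleteSpace X] (x : ℕ → X)
    (hnorm : ∀ i, ‖x i‖ = 1) (hbasis : IsSchauderBasis x)
    (C : ℝ) (hC : 1 ≤ C)
    (hbimono : ∀ (s : Finset ℕ) (a : ℕ → ℝ) (p q : ℕ),
      ‖∑ i ∈ s.filter (fun i => p < i ∧ i ≤ q), a i • x i‖ ≤ C * ‖∑ i ∈ s, a i • x i‖)
    (a : ℕ → ℝ) (ha : BddAbove (XL2Set x a)) (ε : ℝ) (hε : 0 < ε) :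
    ∃ (n : ℕ) (k : ℕ → ℕ), k 0 = 0 ∧ StrictMono k ∧
      ∃ y : ℕ → StrongDual ℝ X,
        (∀ i < n, ∀ j : ℕ, ¬(k i < j ∧ j ≤ k (i + 1)) → y i (x j) = 0) ∧
        (∑ i ∈ Finset.range n, ‖y i‖ ^ 2) ≤ 1 ∧
        (XL2Norm x a - ε) / C ≤
          ∑ i ∈ Finset.range n, y i (∑ j ∈ Finset.Ioc (k i) (k (i + 1)), a j • x j) := by
  classical
  have hC0 : (0:ℝ) < C := lt_of_lt_of_le zero_lt_one hC
  by_cases hcase : XL2Norm x a - ε ≤ 0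
  · refine ⟨0, id, rfl, strictMono_id, 0, by simp, by simp, ?_⟩
    simp only [Finset.range_zero, Finset.sum_empty]
    exact div_nonpos_of_nonpos_of_nonneg hcase hC0.le
  push_neg at hcase
  have hne : (XL2Set x a).Nonempty := ⟨_, (fun i => i), strictMono_id, rfl⟩
  have hlt0 : XL2Norm x a - ε < sSup (XL2Set x a) := by
    unfold XL2Norm; linarith
  obtain ⟨r, hrmem, hlt⟩ := exists_lt_of_lt_csSup hne hlt0
  obtain ⟨k', hk', hr⟩ := hrmem
  set F : ℕ → ℝ := fun j => ‖∑ i ∈ Finset.Ioc (k' j) (k' (j + 1)), a i • x i‖ ^ 2 with hF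
  have hsummable : Summable F := by
    by_contra hns
    rw [hr, tsum_eq_zero_of_not_summable hns, Real.sqrt_zero] at hlt
    linarith
  have htend : Tendsto (fun m => Real.sqrt (∑ j ∈ Finset.range m, F j)) atTop (nhds r) := by
    rw [hr]
    exact (Real.continuous_sqrt.tendsto _).comp hsummable.hasSum.tendsto_sum_nat
  obtain ⟨m, hm⟩ := (htend.eventually (eventually_gt_nhds hlt)).exists
  -- hm : XL2Norm x a - ε < sqrt (∑ j ∈ range m, F j)
  set S := ∑ j ∈ Finset.range m, F j with hSdef
  have hS0 : 0 < S := Real.sqrt_pos.mp (lt_trans hcase hm)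
  have hSs : Real.sqrt S * Real.sqrt S = S := Real.mul_self_sqrt hS0.le
  have hsq : (0:ℝ) < Real.sqrt S := Real.sqrt_pos.mpr hS0
  choose g hg1 hg2 hg3 using fun i => key_functional x (schauder_li x hbasis) C hC hbimono a (k' i) (k' (i+1))
  set b : ℕ → X := fun i => ∑ j ∈ Finset.Ioc (k' i) (k' (i + 1)), a j • x j with hb
  have hFb : ∀ i, F i = ‖b i‖ ^ 2 := fun i => rfl
  have hg3' : ∀ i, g i (b i) = ‖b i‖ := fun i => hg3 i
  set c : ℕ → ℝ := fun i => ‖b i‖ / (C * Real.sqrt S) with hc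
  have hcnn : ∀ i, 0 ≤ c i := fun i => div_nonneg (norm_nonneg _) (by positivity)
  set kk : ℕ → ℕ := fun i => if i = 0 then 0 else k' i with hkk
  have hkk0 : ∀ i, kk i ≤ k' i := by
    intro i; rw [hkk]; dsimp only; split
    · exact Nat.zero_le _
    · exact le_refl _
  have hkk1 : ∀ i, kk (i + 1) = k' (i + 1) := fun i => if_neg (Nat.succ_ne_zero i)
  refine ⟨m, kk, rfl, ?_, fun i => c i • g i, ?_, ?_, ?_⟩
  · apply strictMono_nat_of_lt_succ
    intro i
    rw [hkk1]
    cases i with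
    | zero =>
      show kk 0 < k' 1
      rw [hkk]
      exact lt_of_le_of_lt (Nat.zero_le (k' 0)) (hk' Nat.zero_lt_one)
    | succ i =>
      show kk (i+1) < k' (i+2)
      rw [hkk1]
      exact hk' (Nat.lt_succ_self _)
  · intro i _ j hj
    have h0 : g i (x j) = 0 := by
      apply hg1
      intro ⟨h1, h2⟩
      exact hj ⟨lt_of_le_of_lt (hkk0 i) h1, by rw [hkk1]; exact h2⟩
    simp [ContinuousLinearMap.smul_apply, h0]
  · have hterm : ∀ i ∈ Finset.range m, ‖c i • g i‖ ^ 2 ≤ F i / S := by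
      intro i _
      have h1 : ‖c i • g i‖ = |c i| * ‖g i‖ := by rw [norm_smul, Real.norm_eq_abs]
      have h2 : ‖c i • g i‖ ≤ ‖b i‖ / Real.sqrt S := by
        rw [h1, abs_of_nonneg (hcnn i)]
        calc c i * ‖g i‖ ≤ c i * C := mul_le_mul_of_nonneg_left (hg2 i) (hcnn i)
          _ = ‖b i‖ / Real.sqrt S := by
              rw [hc]; field_simp
      calc ‖c i • g i‖ ^ 2 ≤ (‖b i‖ / Real.sqrt S) ^ 2 :=
            pow_le_pow_left₀ (norm_nonneg _) h2 2
        _ = F i / S := by rw [div_pow, Real.sq_sqrt hS0.le, hFb]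
    calc ∑ i ∈ Finset.range m, ‖c i • g i‖ ^ 2 ≤ ∑ i ∈ Finset.range m, F i / S :=
          Finset.sum_le_sum hterm
      _ = S / S := by rw [← Finset.sum_div]
      _ = 1 := div_self hS0.ne'
  · have hblock : ∀ i ∈ Finset.range m,
        (c i • g i) (∑ j ∈ Finset.Ioc (kk i) (kk (i + 1)), a j • x j) = c i * ‖b i‖ := by
      intro i _
      have hgval : g i (∑ j ∈ Finset.Ioc (kk i) (kk (i + 1)), a j • x j) = ‖b i‖ := by
        rw [hkk1]
        rcases Nat.eq_zero_or_pos i with hi0 | hip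
        · subst hi0
          have h01 : kk 0 = 0 := rfl
          rw [h01]
          have hsplit : ∑ j ∈ Finset.Ioc 0 (k' 0), a j • x j
              + ∑ j ∈ Finset.Ioc (k' 0) (k' 1), a j • x j
              = ∑ j ∈ Finset.Ioc 0 (k' 1), a j • x j :=
            Finset.sum_Ioc_consecutive _ (Nat.zero_le _) (hk' Nat.zero_lt_one).le
          rw [← hsplit, map_add]
          have hz : g 0 (∑ j ∈ Finset.Ioc 0 (k' 0), a j • x j) = 0 := by
            rw [map_sum]
            apply Finset.sum_eq_zero
            intro j hjmem
            simp only [Finset.mem_Ioc] at hjmem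
            rw [map_smul]
            have : g 0 (x j) = 0 := hg1 0 j (by omega)
            simp [this]
          rw [hz, zero_add]
          exact hg3' 0
        · have : kk i = k' i := if_neg (Nat.pos_iff_ne_zero.mp hip)
          rw [this]
          exact hg3' i
      rw [ContinuousLinearMap.smul_apply, hgval, smul_eq_mul]
    rw [Finset.sum_congr rfl hblock]
    have hsum : ∑ i ∈ Finset.range m, c i * ‖b i‖ = Real.sqrt S / C := by
      have h1 : ∀ i ∈ Finset.range m, c i * ‖b i‖ = F i / (C * Real.sqrt S) := by
        intro i _
        rw [hc, hFb]
        field_simp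
      rw [Finset.sum_congr rfl h1, ← Finset.sum_div, ← hSdef,
        mul_comm C (Real.sqrt S), ← div_div, Real.div_sqrt]
    rw [hsum]
    have : (XL2Norm x a - ε) ≤ Real.sqrt S := hm.le
    gcongr
end

section
/- Let $K = \bigcup_{n=0}^\infty K_n$ be a union of weak$^*$-compact subsets of a dual ball, with $0$ in the weak$^*$-closure of the union appropriately; then for any $\varepsilon > 0$ and any ordinal $\eta$, the $\eta$-th $\varepsilon$-Szlenk derivation satisfies $s_\varepsilon^\eta(K) \subset \{0\} \cup \bigcup_{n=0}^\infty s_\varepsilon^\eta(K_n)$, provided each $K_n$ has the property that points of $K_n$ other than $0$ are weak$^*$-isolated from $\bigcup_{m \neq n} K_m$ (as in the case $K_n = \{2^{-n}\sum_{i \in E} x_i^* : E \in \mathcal{F}_n\}$ for regular families $\mathcal{F}_n$). Consequently $Sz(K, \varepsilon) \leq (\sup_n Sz(K_n, \varepsilon)) + 1$. -/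
open NormedSpace

/-- One step of the `ε`-Szlenk derivation of a set `K ⊆ X*`: the points of `K` all of whose
weak* neighborhoods meet `K` in a set of norm-diameter at least `ε`. -/
noncomputable def szDeriv {X : Type*} [NormedAddCommGroup X] [NormedSpace ℝ X]
    (ε : ℝ) (K : Set (StrongDual ℝ X)) : Set (StrongDual ℝ X) :=
  { f | f ∈ K ∧ ∀ U : Set (WeakDual ℝ X), IsOpen U → StrongDual.toWeakDual f ∈ U →
      ε ≤ Metric.diam { g | g ∈ K ∧ StrongDual.toWeakDual g ∈ U } }

/-- The transfinite iteration `s_ε^o(K)` of the `ε`-Szlenk derivation. -/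
noncomputable def szIter {X : Type*} [NormedAddCommGroup X] [NormedSpace ℝ X]
    (ε : ℝ) (K : Set (StrongDual ℝ X)) (o : Ordinal) : Set (StrongDual ℝ X) :=
  Ordinal.limitRecOn o K (fun _ S => szDeriv ε S)
    (fun o _ ih => ⋂ b : { b : Ordinal // b < o }, ih b.1 b.2)

section helpers
variable {X : Type*} [NormedAddCommGroup X] [NormedSpace ℝ X]

lemma szIter_zero (ε : ℝ) (K : Set (StrongDual ℝ X)) : szIter ε K 0 = K :=
  Ordinal.limitRecOn_zero _ _ _

lemma szIter_succ (ε : ℝ) (K : Set (StrongDual ℝ X)) (o : Ordinal) :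
    szIter ε K (Order.succ o) = szDeriv ε (szIter ε K o) :=
  Ordinal.limitRecOn_succ _ _ _ _

lemma szIter_limit (ε : ℝ) (K : Set (StrongDual ℝ X)) {o : Ordinal} (h : Order.IsSuccLimit o) :
    szIter ε K o = ⋂ b : { b : Ordinal // b < o }, szIter ε K b.1 :=
  Ordinal.limitRecOn_limit _ _ _ _ h

lemma szDeriv_subset (ε : ℝ) (K : Set (StrongDual ℝ X)) : szDeriv ε K ⊆ K := fun _ hf => hf.1

lemma szIter_subset (ε : ℝ) (K : Set (StrongDual ℝ X)) (o : Ordinal) : szIter ε K o ⊆ K := by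
  induction o using Ordinal.limitRecOn with
  | zero => rw [szIter_zero]
  | add_one o ih => rw [Ordinal.add_one_eq_succ, szIter_succ]; exact (szDeriv_subset _ _).trans ih
  | limit o ho ih =>
      rw [szIter_limit _ _ ho]
      intro f hf
      have h0 := Set.mem_iInter.1 hf ⟨0, ho.pos⟩
      rw [szIter_zero] at h0
      exact h0

lemma szIter_anti (ε : ℝ) (K : Set (StrongDual ℝ X)) {a b : Ordinal} (hab : a ≤ b) :
    szIter ε K b ⊆ szIter ε K a := by
  induction b using Ordinal.limitRecOn with
  | zero => obtain rfl := nonpos_iff_eq_zero.1 hab; exact subset_rfl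
  | add_one o ih =>
      rw [Ordinal.add_one_eq_succ] at hab ⊢
      rcases eq_or_lt_of_le hab with h | h
      · subst h; exact subset_rfl
      · rw [szIter_succ]
        exact (szDeriv_subset _ _).trans (ih (Order.lt_succ_iff.1 h))
  | limit o ho ih =>
      rcases eq_or_lt_of_le hab with h | h
      · subst h; exact subset_rfl
      · rw [szIter_limit _ _ ho]
        exact fun f hf => Set.mem_iInter.1 hf ⟨a, h⟩

lemma szIter_union_subset
    (K : ℕ → Set (StrongDual ℝ X))
    (hball : ∀ n, K n ⊆ Metric.closedBall 0 1)
    (hiso : ∀ n, ∀ f ∈ K n, f ≠ 0 → ∃ U : Set (WeakDual ℝ X),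
      IsOpen U ∧ StrongDual.toWeakDual f ∈ U ∧
        ∀ m : ℕ, m ≠ n → ∀ g ∈ K m, StrongDual.toWeakDual g ∉ U)
    (ε : ℝ) (η : Ordinal) :
    szIter ε (⋃ n, K n) η ⊆ {0} ∪ ⋃ n, szIter ε (K n) η := by
  have huniq : ∀ {f : StrongDual ℝ X} {n m : ℕ}, f ∈ K n → f ∈ K m → f ≠ 0 → m = n := by
    intro f n m hn hm hf0
    by_contra hmn
    obtain ⟨U, hUo, hfU, hUex⟩ := hiso n f hn hf0
    exact hUex m hmn f hm hfU
  induction η using Ordinal.limitRecOn with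
  | zero =>
      rw [szIter_zero]
      intro f hf
      right
      obtain ⟨n, hn⟩ := Set.mem_iUnion.1 hf
      exact Set.mem_iUnion.2 ⟨n, by rw [szIter_zero]; exact hn⟩
  | add_one o ih =>
      rw [Ordinal.add_one_eq_succ, szIter_succ]
      rintro f ⟨hfS, hfd⟩
      by_cases hf0 : f = 0
      · exact Or.inl hf0
      rcases ih hfS with h0 | hm
      · exact absurd (Set.mem_singleton_iff.1 h0) hf0
      obtain ⟨n, hn⟩ := Set.mem_iUnion.1 hm
      have hfK : f ∈ K n := szIter_subset _ _ _ hn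
      obtain ⟨U, hUo, hfU, hUex⟩ := hiso n f hfK hf0
      have hne : StrongDual.toWeakDual f ≠ 0 := fun h => hf0 (by
        apply StrongDual.toWeakDual.injective
        rw [h, map_zero])
      right
      refine Set.mem_iUnion.2 ⟨n, ?_⟩
      rw [szIter_succ]
      refine ⟨hn, fun V hVo hfV => ?_⟩
      have hkey := hfd (U ∩ V ∩ {(0 : WeakDual ℝ X)}ᶜ)
        ((hUo.inter hVo).inter isClosed_singleton.isOpen_compl)
        ⟨⟨hfU, hfV⟩, hne⟩
      refine le_trans hkey (Metric.diam_mono ?_ ?_)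
      · rintro g ⟨hgS, ⟨hgU, hgV⟩, hgW⟩
        rcases ih hgS with h0 | hm'
        · exact absurd (by rw [Set.mem_singleton_iff.1 h0, map_zero]; rfl) hgW
        obtain ⟨m, hgm⟩ := Set.mem_iUnion.1 hm'
        have hgK : g ∈ K m := szIter_subset _ _ _ hgm
        by_cases hmn : m = n
        · exact ⟨hmn ▸ hgm, hgV⟩
        · exact absurd hgU (hUex m hmn g hgK)
      · exact Metric.isBounded_closedBall.subset
          (fun g hg => hball n (szIter_subset _ _ _ hg.1))
  | limit o ho ih =>
      intro f hf
      by_cases hf0 : f = 0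
      · exact Or.inl hf0
      rw [szIter_limit _ _ ho] at hf
      have hmem : ∀ b, b < o → ∃ n, f ∈ szIter ε (K n) b := by
        intro b hb
        have hb' := Set.mem_iInter.1 hf ⟨b, hb⟩
        rcases ih b hb hb' with h0 | hm
        · exact absurd (Set.mem_singleton_iff.1 h0) hf0
        · exact Set.mem_iUnion.1 hm
      obtain ⟨n, hn0⟩ := hmem 0 ho.pos
      have hfKn : f ∈ K n := szIter_subset _ _ _ hn0
      right
      refine Set.mem_iUnion.2 ⟨n, ?_⟩
      rw [szIter_limit _ _ ho]
      refine Set.mem_iInter.2 fun b => ?_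
      obtain ⟨m, hm⟩ := hmem b.1 b.2
      have hmeq : m = n := huniq hfKn (szIter_subset _ _ _ hm) hf0
      exact hmeq ▸ hm

end helpers

/-- Let `K = ⋃ₙ Kₙ` with each `Kₙ` weak*-compact in the dual ball, and suppose every nonzero
point of `Kₙ` is weak*-isolated from `⋃_{m ≠ n} Kₘ`. Then
`s_ε^η(K) ⊆ {0} ∪ ⋃ₙ s_ε^η(Kₙ)` for every `ε > 0` and ordinal `η`; consequently
`Sz(K, ε) ≤ (supₙ Sz(Kₙ, ε)) + 1` (any ordinal bounding all the `Sz(Kₙ, ε)`, plus one,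
bounds `Sz(K, ε)`). -/
theorem szlenk_union {X : Type*} [NormedAddCommGroup X] [NormedSpace ℝ X] [CompleteSpace X]
    (K : ℕ → Set (StrongDual ℝ X))
    (hcpt : ∀ n, IsCompact (StrongDual.toWeakDual '' K n))
    (hball : ∀ n, K n ⊆ Metric.closedBall 0 1)
    (hiso : ∀ n, ∀ f ∈ K n, f ≠ 0 → ∃ U : Set (WeakDual ℝ X),
      IsOpen U ∧ StrongDual.toWeakDual f ∈ U ∧
        ∀ m : ℕ, m ≠ n → ∀ g ∈ K m, StrongDual.toWeakDual g ∉ U) :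
    (∀ ε > (0 : ℝ), ∀ η : Ordinal,
        szIter ε (⋃ n, K n) η ⊆ {0} ∪ ⋃ n, szIter ε (K n) η) ∧
    ∀ ε > (0 : ℝ), ∀ o : Ordinal,
      (∀ n, ∃ η ≤ o, szIter ε (K n) η = ∅) →
        ∃ η ≤ o + 1, szIter ε (⋃ n, K n) η = ∅ := by
  constructor
  · intro ε _ η
    exact szIter_union_subset K hball hiso ε η
  · intro ε hε o ho
    refine ⟨o + 1, le_rfl, ?_⟩
    have hsub : szIter ε (⋃ n, K n) o ⊆ {0} := by
      intro f hf
      rcases szIter_union_subset K hball hiso ε o hf with h0 | hm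
      · exact h0
      · obtain ⟨n, hn⟩ := Set.mem_iUnion.1 hm
        obtain ⟨η', hη', hemp⟩ := ho n
        have : f ∈ szIter ε (K n) η' := szIter_anti ε (K n) hη' hn
        rw [hemp] at this
        exact absurd this (Set.notMem_empty f)
    rw [show o + 1 = Order.succ o from (Ordinal.add_one_eq_succ o), szIter_succ]
    ext f
    simp only [Set.mem_empty_iff_false, iff_false]
    rintro ⟨hfS, hfd⟩
    have h := hfd Set.univ isOpen_univ (Set.mem_univ _)
    have hsub' : { g | g ∈ szIter ε (⋃ n, K n) o ∧ StrongDual.toWeakDual g ∈ Set.univ } ⊆ {0} :=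
      fun g hg => hsub hg.1
    have := le_trans (Metric.diam_mono hsub' Bornology.isBounded_singleton)
      (le_of_eq (Metric.diam_singleton))
    linarith [le_trans h this]
end
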